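/- arXiv:1806.10365 — 8 statements merged into one kernel-verified Lean document; each statement's English description precedes it below -/
import Mathlib

section
/- Given any pair of distinct points p, q from βX \ υX, there exists a function f ∈ O^p such that f*(q) = ∞, where O^p = {g ∈ C(X) : p lies in the βX-interior of the βX-closure of the zero-set Z(g)}. -/
open Filter Topology

variable {X : Type*} [TopologicalSpace X]

/-- The continuous extension `f* : βX → ℝ ∪ {∞}` of `f ∈ C(X)` to the Stone–Čech
compactification, with values in the one-point compactification of `ℝ`. -/
noncomputable def fstar (f : C(X, ℝ)) : StoneCech X → OnePoint ℝ :=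
  stoneCechExtend (OnePoint.continuous_coe.comp f.continuous)

/-- The set `C_p = {f ∈ C(X) : f*(p) ∈ ℝ}`. -/
def Cp (p : StoneCech X) : Set C(X, ℝ) :=
  {f : C(X, ℝ) | ∃ r : ℝ, fstar f p = (r : OnePoint ℝ)}

/-- The Hewitt realcompactification `υX`, viewed as the set of points of `βX` at which
every `f ∈ C(X)` has a real value. -/
def upsilon (X : Type*) [TopologicalSpace X] : Set (StoneCech X) :=
  {p | ∀ f : C(X, ℝ), ∃ r : ℝ, fstar f p = (r : OnePoint ℝ)}

/-- Given any pair of distinct points `p, q ∈ βX \ υX`, there exists `f ∈ Oᵖ` (i.e. `p` lies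
in the `βX`-interior of the `βX`-closure of the zero-set `Z(f)`) with `f*(q) = ∞`. -/
theorem statement1 [T2Space X] [CompletelyRegularSpace X] (p q : StoneCech X)
    (hp : p ∉ upsilon X) (hq : q ∉ upsilon X) (hpq : p ≠ q) :
    ∃ f : C(X, ℝ),
      p ∈ interior (closure (stoneCechUnit '' {x : X | f x = 0})) ∧
      fstar f q = OnePoint.infty := by
  -- get g with g*(q) = ∞
  simp only [upsilon, Set.mem_setOf_eq, not_forall] at hq
  obtain ⟨g, hg⟩ := hq
  have hgq : fstar g q = OnePoint.infty := by
    cases h : fstar g q with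
    | infty => rfl
    | coe r => exact absurd ⟨r, h⟩ hg
  -- disjoint open neighborhoods
  obtain ⟨U, V, hU, hV, hpU, hqV, hUV⟩ := t2_separation hpq
  obtain ⟨L, hLc, hpL, hLU⟩ := exists_compact_subset hU hpU
  obtain ⟨K, hKc, hqK, hKV⟩ := exists_compact_subset hV hqV
  obtain ⟨k, hk0, hk1, _⟩ := exists_continuous_zero_one_of_isClosed hLc.isClosed hKc.isClosed
    (Set.disjoint_of_subset hLU hKV hUV)
  set f : C(X, ℝ) := (k.comp ⟨stoneCechUnit, continuous_stoneCechUnit⟩) * g with hf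
  refine ⟨f, ?_, ?_⟩
  · -- p ∈ interior (closure ...)
    have hsub : interior L ⊆ closure (stoneCechUnit '' {x : X | f x = 0}) := by
      have h1 : interior L ⊆ closure (interior L ∩ Set.range (stoneCechUnit : X → StoneCech X)) := by
        have := (denseRange_stoneCechUnit (α := X)).open_subset_closure_inter
          (isOpen_interior (s := L))
        simpa [Set.inter_comm] using this
      refine h1.trans (closure_mono ?_)
      rintro x ⟨hxL, y, rfl⟩
      refine ⟨y, ?_, rfl⟩
      simp only [Set.mem_setOf_eq, hf, ContinuousMap.mul_apply, ContinuousMap.comp_apply,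
        ContinuousMap.coe_mk]
      rw [hk0 (interior_subset hxL)]
      simp
    exact interior_mono hsub (mem_interior_iff_mem_nhds.2 (isOpen_interior.mem_nhds hpL))
  · -- f* = g* on a dense subset of interior K, hence at q
    have hcl : IsClosed {x : StoneCech X | fstar f x = fstar g x} :=
      isClosed_eq (continuous_stoneCechExtend _) (continuous_stoneCechExtend _)
    have h1 : interior K ⊆ closure (interior K ∩ Set.range (stoneCechUnit : X → StoneCech X)) := by
      have := (denseRange_stoneCechUnit (α := X)).open_subset_closure_inter
        (isOpen_interior (s := K))
      simpa [Set.inter_comm] using this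
    have h2 : interior K ∩ Set.range (stoneCechUnit : X → StoneCech X) ⊆
        {x : StoneCech X | fstar f x = fstar g x} := by
      rintro x ⟨hxK, y, rfl⟩
      have hfy : f y = g y := by
        simp only [hf, ContinuousMap.mul_apply, ContinuousMap.comp_apply, ContinuousMap.coe_mk]
        rw [hk1 (interior_subset hxK)]
        simp
      show fstar f (stoneCechUnit y) = fstar g (stoneCechUnit y)
      have e1 := congrFun (stoneCechExtend_extends (OnePoint.continuous_coe.comp f.continuous)) y
      have e2 := congrFun (stoneCechExtend_extends (OnePoint.continuous_coe.comp g.continuous)) y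
      simp only [Function.comp_apply] at e1 e2
      rw [fstar, fstar, e1, e2, hfy]
    have hq' : q ∈ {x : StoneCech X | fstar f x = fstar g x} :=
      (closure_minimal h2 hcl) (h1 hqK)
    rw [hq', hgq]
end

section
/- If p ∈ βX \ υX, then υ_{C_p}X = υX ∪ {p}; that is, the set of points q ∈ βX at which every function of C_p extends real-valuedly is exactly the Hewitt realcompactification together with the single point p. -/
open Filter Topology
open scoped OnePoint

variable {X : Type*} [TopologicalSpace X]

/-- For a subset `A ⊆ C(X)`, the set `υ_A X` of points of `βX` at which each `f ∈ A` has a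
real value. -/
def upsilonA (X : Type*) [TopologicalSpace X] (A : Set C(X, ℝ)) : Set (StoneCech X) :=
  {p | ∀ f ∈ A, ∃ r : ℝ, fstar f p = (r : OnePoint ℝ)}

/-- The trace on `X` of the neighborhood filter of `q ∈ βX`. -/
def Fq (q : StoneCech X) : Filter X := comap stoneCechUnit (𝓝 q)

lemma Fq_neBot (q : StoneCech X) : (Fq q).NeBot := by
  rw [Fq, comap_neBot_iff]
  intro t ht
  rcases mem_nhds_iff.1 ht with ⟨u, hu, huo, hq⟩
  rcases (denseRange_stoneCechUnit (α := X)).exists_mem_open huo ⟨q, hq⟩ with ⟨x, hx⟩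
  exact ⟨x, hu hx⟩

lemma tendsto_fstar (f : C(X, ℝ)) (q : StoneCech X) :
    Tendsto (fun x => ((f x : ℝ) : OnePoint ℝ)) (Fq q) (𝓝 (fstar f q)) := by
  have h1 : Tendsto (stoneCechUnit : X → StoneCech X) (Fq q) (𝓝 q) := tendsto_comap
  have h2 := ((continuous_stoneCechExtend
    (OnePoint.continuous_coe.comp f.continuous)).tendsto q).comp h1
  have h3 : (fstar f) ∘ stoneCechUnit = fun x => ((f x : ℝ) : OnePoint ℝ) :=
    stoneCechExtend_extends _
  rwa [show (fun x => ((f x : ℝ) : OnePoint ℝ)) = (fstar f) ∘ stoneCechUnit from h3.symm]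

lemma fstar_eq_of_tendsto {f : C(X, ℝ)} {q : StoneCech X} {y : OnePoint ℝ}
    (h : Tendsto (fun x => ((f x : ℝ) : OnePoint ℝ)) (Fq q) (𝓝 y)) : fstar f q = y :=
  haveI := Fq_neBot q
  tendsto_nhds_unique (tendsto_fstar f q) h

lemma eq_infty_of_not_real {y : OnePoint ℝ} (h : ¬∃ r : ℝ, y = (r : OnePoint ℝ)) :
    y = ∞ := by
  cases y using OnePoint.rec with
  | infty => rfl
  | coe r => exact absurd ⟨r, rfl⟩ h

/-- If `p ∈ βX \ υX`, then `υ_{C_p} X = υX ∪ {p}`. -/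
theorem statement2 [T2Space X] [CompletelyRegularSpace X] (p : StoneCech X)
    (hp : p ∉ upsilon X) :
    upsilonA X (Cp p) = upsilon X ∪ {p} := by
  apply Set.Subset.antisymm
  · -- hard inclusion
    intro q hq
    by_contra h
    simp only [Set.mem_union, Set.mem_singleton_iff, not_or] at h
    obtain ⟨hq1, hq2⟩ := h
    -- a function infinite at q
    simp only [upsilon, Set.mem_setOf_eq, not_forall] at hq1
    obtain ⟨g, hg⟩ := hq1
    have hginf : fstar g q = ∞ := eq_infty_of_not_real hg
    -- Urysohn function on βX with k q = 0, k p = 1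
    obtain ⟨k, hk0, hk1, hk01⟩ := exists_continuous_zero_one_of_isClosed
      (isClosed_singleton (x := q)) (isClosed_singleton (x := p))
      (Set.disjoint_singleton.2 hq2)
    -- the function f := (1/(1+|g|) + k)⁻¹
    set d : C(X, ℝ) :=
      ⟨fun x => (1 + |g x|)⁻¹ + k (stoneCechUnit x), by
        apply Continuous.add
        · exact ((continuous_const.add g.continuous.abs).inv₀ fun x => (by positivity : (0:ℝ) < 1 + |g x|).ne')
        · exact k.continuous.comp continuous_stoneCechUnit⟩ with hd
    have hdpos : ∀ x, 0 < d x := fun x => by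
      have h1 : 0 < (1 + |g x|)⁻¹ := by positivity
      have h2 : 0 ≤ k (stoneCechUnit x) := (hk01 _).1
      simpa [hd] using add_pos_of_pos_of_nonneg h1 h2
    set f : C(X, ℝ) := ⟨fun x => (d x)⁻¹, (d.continuous.inv₀ fun x => (hdpos x).ne')⟩
      with hf
    -- k ∘ stoneCechUnit tends to k r along Fq r
    have hktendsto : ∀ r : StoneCech X,
        Tendsto (fun x => k (stoneCechUnit x)) (Fq r) (𝓝 (k r)) := fun r =>
      (k.continuous.tendsto r).comp tendsto_comap
    -- f is finite at p: eventually d ≥ 1/2 so f ∈ [0,2]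
    have hfp : ∃ r : ℝ, fstar f p = (r : OnePoint ℝ) := by
      have hk1p : k p = 1 := hk1 rfl
      have hev : ∀ᶠ x in Fq p, (1 : ℝ)/2 ≤ k (stoneCechUnit x) := by
        exact (hktendsto p).eventually (eventually_ge_nhds (by rw [hk1p]; norm_num))
      have hevf : ∀ᶠ x in Fq p, ((f x : ℝ) : OnePoint ℝ) ∈
          ((↑) '' Set.Icc (0:ℝ) 2 : Set (OnePoint ℝ)) := by
        filter_upwards [hev] with x hx
        refine ⟨f x, ⟨(inv_pos.2 (hdpos x)).le, ?_⟩, rfl⟩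
        have hd2 : (1:ℝ)/2 ≤ d x := by
          have : (0:ℝ) ≤ (1 + |g x|)⁻¹ := by positivity
          simp only [hd, ContinuousMap.coe_mk]
          linarith
        calc f x = (d x)⁻¹ := rfl
        _ ≤ ((1:ℝ)/2)⁻¹ := by
            apply inv_anti₀ (by norm_num) hd2
        _ = 2 := by norm_num
      have hclosed : IsClosed ((↑) '' Set.Icc (0:ℝ) 2 : Set (OnePoint ℝ)) :=
        ((isCompact_Icc).image OnePoint.continuous_coe).isClosed
      haveI := Fq_neBot p
      have := hclosed.mem_of_tendsto (tendsto_fstar f p) hevf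
      obtain ⟨r, _, hr⟩ := this
      exact ⟨r, hr.symm⟩
    -- f is infinite at q
    have hfq : fstar f q = ∞ := by
      -- g tends to cocompact along Fq q
      have h1 : Tendsto (fun x => ((g x : ℝ) : OnePoint ℝ)) (Fq q) (𝓝 ∞) := by
        rw [← hginf]; exact tendsto_fstar g q
      have h2 : Tendsto (fun x => g x) (Fq q) (cocompact ℝ) := by
        rw [← Filter.coclosedCompact_eq_cocompact, ← OnePoint.comap_coe_nhds_infty]
        exact tendsto_comap_iff.2 h1
      have h3 : Tendsto (fun x => |g x|) (Fq q) atTop := by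
        rw [cocompact_eq_atBot_atTop] at h2
        exact (tendsto_sup.2 ⟨tendsto_abs_atBot_atTop, tendsto_abs_atTop_atTop⟩).comp h2
      have h4 : Tendsto (fun x => (1 + |g x|)⁻¹) (Fq q) (𝓝 0) :=
        tendsto_inv_atTop_zero.comp (tendsto_atTop_add_const_left _ 1 h3)
      have hkq : k q = 0 := hk0 rfl
      have h5 : Tendsto (fun x => d x) (Fq q) (𝓝 0) := by
        have := h4.add (hktendsto q)
        rw [hkq, add_zero] at this
        simpa [hd] using this
      have h6 : Tendsto (fun x => d x) (Fq q) (𝓝[>] 0) :=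
        tendsto_nhdsWithin_iff.2 ⟨h5, Eventually.of_forall fun x => hdpos x⟩
      have h7 : Tendsto (fun x => f x) (Fq q) atTop := h6.inv_tendsto_nhdsGT_zero
      have h8 : Tendsto (fun x => ((f x : ℝ) : OnePoint ℝ)) (Fq q) (𝓝 ∞) := by
        refine OnePoint.tendsto_coe_infty.comp (h7.mono_right ?_)
        rw [Filter.coclosedCompact_eq_cocompact, cocompact_eq_atBot_atTop]
        exact le_sup_right
      exact fstar_eq_of_tendsto h8
    -- contradiction
    obtain ⟨s, hs⟩ := hq f hfp
    rw [hfq] at hs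
    exact (OnePoint.coe_ne_infty s) hs.symm
  · rintro q (hq | hq)
    · exact fun f _ => hq f
    · rw [Set.mem_singleton_iff] at hq
      subst hq
      exact fun f hf => hf
end

section
/- If p and q are distinct points in βX \ υX, then C_p ≠ C_q as subsets (and hence as subrings) of C(X). -/
open Filter Topology

variable {X : Type*} [TopologicalSpace X]

theorem fstar_stoneCechUnit (f : C(X, ℝ)) (x : X) :
    fstar f (stoneCechUnit x) = ((f x : ℝ) : OnePoint ℝ) :=
  congrFun (stoneCechExtend_extends (OnePoint.continuous_coe.comp f.continuous)) x

/-- On an open set, `fstar f` agrees with any continuous map that agrees with `f` on the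
trace of the open set on `X`. -/
theorem fstar_eqOn {f : C(X, ℝ)} {U : Set (StoneCech X)} (hU : IsOpen U)
    {c : StoneCech X → OnePoint ℝ} (hc : Continuous c)
    (h : ∀ x : X, stoneCechUnit x ∈ U → ((f x : ℝ) : OnePoint ℝ) = c (stoneCechUnit x)) :
    ∀ z ∈ U, fstar f z = c z := by
  have hcont : Continuous (fstar f) := continuous_stoneCechExtend _
  have hclosed : IsClosed {z | fstar f z = c z} := isClosed_eq hcont hc
  have hsub : U ∩ Set.range (stoneCechUnit : X → StoneCech X) ⊆ {z | fstar f z = c z} := by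
    rintro z ⟨hzU, x, rfl⟩
    simpa [fstar_stoneCechUnit] using h x hzU
  intro z hz
  have hdense : Dense (Set.range (stoneCechUnit : X → StoneCech X)) :=
    denseRange_stoneCechUnit
  have : U ⊆ closure (U ∩ Set.range (stoneCechUnit : X → StoneCech X)) :=
    hdense.open_subset_closure_inter hU
  exact hclosed.closure_subset (closure_mono hsub (this hz))

/-- If `p` and `q` are distinct points in `βX \ υX`, then `C_p ≠ C_q`. -/
theorem statement3 [T2Space X] [CompletelyRegularSpace X] (p q : StoneCech X)
    (hp : p ∉ upsilon X) (hq : q ∉ upsilon X) (hpq : p ≠ q) :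
    Cp p ≠ Cp q := by
  -- get f with f*(p) = OnePoint.infty
  simp only [upsilon, Set.mem_setOf_eq, not_forall, not_exists] at hp
  obtain ⟨f, hf⟩ := hp
  have hfinfty : fstar f p = OnePoint.infty := by
    cases hfp : fstar f p with
    | infty => rfl
    | coe r => exact absurd hfp (hf r)
  -- separate p and q by disjoint open sets
  obtain ⟨U, V, hUo, hVo, hpU, hqV, hUV⟩ := t2_separation hpq
  obtain ⟨K, hKnhds, hKclosed, hKU⟩ := exists_mem_nhds_isClosed_subset (hUo.mem_nhds hpU)
  obtain ⟨L, hLnhds, hLclosed, hLV⟩ := exists_mem_nhds_isClosed_subset (hVo.mem_nhds hqV)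
  have hKL : Disjoint L K := (hUV.symm.mono hLV hKU)
  obtain ⟨g, hg0, hg1, _⟩ := exists_continuous_zero_one_of_isClosed hLclosed hKclosed hKL
  -- h = f · (g ∘ ι)
  set h : C(X, ℝ) := f * (g.comp ⟨stoneCechUnit, continuous_stoneCechUnit⟩) with hh
  have hKint : p ∈ interior K := mem_interior_iff_mem_nhds.2 hKnhds
  have hLint : q ∈ interior L := mem_interior_iff_mem_nhds.2 hLnhds
  -- h* p = f* p = OnePoint.infty
  have hp' : fstar h p = OnePoint.infty := by
    have := fstar_eqOn (f := h) (c := fstar f) isOpen_interior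
      (continuous_stoneCechExtend _)
      (fun x hx => by
        have hg : g (stoneCechUnit x) = 1 := hg1 (interior_subset hx)
        rw [fstar_stoneCechUnit]
        simp [hh, hg]) p hKint
    rw [this]
    exact hfinfty
  -- h* q = 0
  have hq' : fstar h q = ((0 : ℝ) : OnePoint ℝ) := by
    exact fstar_eqOn (f := h) isOpen_interior continuous_const
      (fun x hx => by
        have : g (stoneCechUnit x) = 0 := hg0 (interior_subset hx)
        simp [hh, this]) q hLint
  intro heq
  have : h ∈ Cp p := heq ▸ ⟨0, hq'⟩
  obtain ⟨r, hr⟩ := this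
  rw [hp'] at hr
  exact (OnePoint.coe_ne_infty r) hr.symm
end

section
/- If X is a completely regular Hausdorff space that is not pseudocompact (i.e., C*(X) ⊊ C(X)), then the family Σ(X) of all intermediate rings between C*(X) and C(X) contains at least 2^c = 2^{2^{ℵ₀}} distinct members; indeed the map p ↦ C_p is injective on βX \ υX, which has cardinality at least 2^c. -/
open Filter Topology

variable {X : Type*} [TopologicalSpace X]

namespace Stmt4Aux

/-- The trace filter on `X` of the neighborhood filter of `p ∈ βX`. -/
def trf (p : StoneCech X) : Filter X := Filter.comap stoneCechUnit (𝓝 p)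

instance trf_neBot (p : StoneCech X) : (trf p).NeBot := by
  rw [trf, comap_neBot_iff]
  intro t ht
  rcases mem_nhds_iff.mp ht with ⟨U, hUt, hUo, hpU⟩
  obtain ⟨x, hx⟩ := denseRange_stoneCechUnit.exists_mem_open hUo ⟨p, hpU⟩
  exact ⟨x, hUt hx⟩

theorem tendsto_fstar (f : C(X, ℝ)) (p : StoneCech X) :
    Tendsto (fun x => ((f x : ℝ) : OnePoint ℝ)) (trf p) (𝓝 (fstar f p)) := by
  have h1 : Tendsto (stoneCechUnit : X → StoneCech X) (trf p) (𝓝 p) := tendsto_comap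
  have h2 := ((continuous_stoneCechExtend
      (OnePoint.continuous_coe.comp f.continuous)).tendsto p).comp h1
  have he : stoneCechExtend (OnePoint.continuous_coe.comp f.continuous) ∘ stoneCechUnit
      = fun x : X => ((f x : ℝ) : OnePoint ℝ) := stoneCechExtend_extends _
  simpa [fstar, ← he] using h2

theorem fstar_eq {f : C(X, ℝ)} {p : StoneCech X} {y : OnePoint ℝ}
    (h : Tendsto (fun x => ((f x : ℝ) : OnePoint ℝ)) (trf p) (𝓝 y)) : fstar f p = y :=
  tendsto_nhds_unique (tendsto_fstar f p) h

theorem fstar_of_tendsto {f : C(X, ℝ)} {p : StoneCech X} {r : ℝ}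
    (h : Tendsto (⇑f) (trf p) (𝓝 r)) : fstar f p = (r : OnePoint ℝ) :=
  fstar_eq ((OnePoint.continuous_coe.tendsto r).comp h)

theorem tendsto_of_fstar {f : C(X, ℝ)} {p : StoneCech X} {r : ℝ}
    (h : fstar f p = (r : OnePoint ℝ)) : Tendsto (⇑f) (trf p) (𝓝 r) := by
  have h1 := tendsto_fstar f p
  rw [h] at h1
  exact OnePoint.isOpenEmbedding_coe.tendsto_nhds_iff.mpr h1

theorem fstar_of_bdd {f : C(X, ℝ)} {p : StoneCech X} {M : ℝ}
    (h : ∀ᶠ x in trf p, |f x| ≤ M) : ∃ r : ℝ, fstar f p = (r : OnePoint ℝ) := by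
  have hK : IsClosed ((fun r : ℝ => (r : OnePoint ℝ)) '' Set.Icc (-M) M) :=
    (isCompact_Icc.image OnePoint.continuous_coe).isClosed
  have hmem : fstar f p ∈ (fun r : ℝ => (r : OnePoint ℝ)) '' Set.Icc (-M) M := by
    refine hK.mem_of_tendsto (tendsto_fstar f p) (h.mono fun x hx => ?_)
    exact ⟨f x, by rw [Set.mem_Icc]; constructor <;> [linarith [abs_le.mp hx];
      exact (abs_le.mp hx).2], rfl⟩
  obtain ⟨r, -, hr⟩ := hmem
  exact ⟨r, hr.symm⟩

/-- `C_p` as a subring of `C(X, ℝ)`. -/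
def CpSubring (p : StoneCech X) : Subring C(X, ℝ) where
  carrier := Cp p
  zero_mem' := ⟨0, fstar_of_tendsto (by exact (tendsto_const_nhds (x := (0:ℝ))))⟩
  one_mem' := ⟨1, fstar_of_tendsto (by exact (tendsto_const_nhds (x := (1:ℝ))))⟩
  add_mem' := by
    rintro a b ⟨r, hr⟩ ⟨s, hs⟩
    exact ⟨r + s, fstar_of_tendsto (by
      exact (tendsto_of_fstar hr).add (tendsto_of_fstar hs))⟩
  mul_mem' := by
    rintro a b ⟨r, hr⟩ ⟨s, hs⟩
    exact ⟨r * s, fstar_of_tendsto (by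
      exact (tendsto_of_fstar hr).mul (tendsto_of_fstar hs))⟩
  neg_mem' := by
    rintro a ⟨r, hr⟩
    exact ⟨-r, fstar_of_tendsto (by exact (tendsto_of_fstar hr).neg)⟩

theorem bdd_mem_Cp {p : StoneCech X} {f : C(X, ℝ)} (h : ∃ M : ℝ, ∀ x : X, |f x| ≤ M) :
    f ∈ Cp p := by
  obtain ⟨M, hM⟩ := h
  exact fstar_of_bdd (Filter.Eventually.of_forall hM)

/-- Part 1: injectivity of `p ↦ C_p` on the complement of `υX`. -/
theorem injOn_Cp [T2Space X] : Set.InjOn (fun p : StoneCech X => Cp p) ((upsilon X)ᶜ) := by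
  intro p hp q hq hpq
  by_contra hne
  -- a function with `f*(q) = ∞`
  have hq2 : ¬ ∀ f : C(X, ℝ), ∃ r : ℝ, fstar f q = (r : OnePoint ℝ) := hq
  push_neg at hq2
  obtain ⟨f, hfq⟩ := hq2
  -- Urysohn function on `βX` vanishing near `p` with value 1 at `q`
  obtain ⟨g₀, hg₀p, hg₀q, hg₀01⟩ :=
    exists_continuous_zero_one_of_isClosed (isClosed_singleton (x := p))
      (isClosed_singleton (x := q)) (by simpa using hne)
  set g : StoneCech X → ℝ := fun y => max 0 (2 * g₀ y - 1) with hg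
  have hgcont : Continuous g := continuous_const.max (by fun_prop)
  have hgq : g q = 1 := by
    have h1 : g₀ q = 1 := hg₀q rfl
    simp only [hg, h1]
    norm_num
  have hgU : ∀ y, g₀ y < 1/2 → g y = 0 := fun y hy => by
    simp only [hg, max_eq_left_iff]; linarith
  set h : C(X, ℝ) := f * ⟨fun x => g (stoneCechUnit x), hgcont.comp continuous_stoneCechUnit⟩
    with hh
  -- h vanishes eventually along trf p
  have hhp : h ∈ Cp p := by
    refine ⟨0, fstar_of_tendsto ?_⟩
    have hU : {y : StoneCech X | g₀ y < 1/2} ∈ 𝓝 p := by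
      have : g₀ p = 0 := hg₀p rfl
      exact (isOpen_lt (map_continuous g₀) continuous_const).mem_nhds (by simp [this])
    have hev : ∀ᶠ x in trf p, h x = 0 := by
      filter_upwards [Filter.preimage_mem_comap hU] with x hx
      simp only [hh, ContinuousMap.mul_apply, ContinuousMap.coe_mk]
      rw [hgU _ hx, mul_zero]
    exact Tendsto.congr' (by filter_upwards [hev] with x hx; exact hx.symm) tendsto_const_nhds
  have hhq : h ∉ Cp q := by
    rintro ⟨r, hr⟩
    have h1 : Tendsto (⇑h) (trf q) (𝓝 r) := tendsto_of_fstar hr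
    have h2 : ∀ᶠ x in trf q, |h x| ≤ |r| + 1 := by
      have := h1.abs.eventually (ge_mem_nhds (show |r| < |r| + 1 by linarith))
      filter_upwards [this] with x hx using hx
    have h3 : Tendsto (fun x => g (stoneCechUnit x)) (trf q) (𝓝 1) := by
      rw [← hgq]
      exact (hgcont.tendsto q).comp tendsto_comap
    have h4 : ∀ᶠ x in trf q, (1:ℝ)/2 < g (stoneCechUnit x) :=
      h3.eventually (lt_mem_nhds (show (1:ℝ)/2 < 1 by norm_num))
    have h5 : ∀ᶠ x in trf q, |f x| ≤ 2 * (|r| + 1) := by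
      filter_upwards [h2, h4] with x hx2 hx4
      have hfx : h x = f x * g (stoneCechUnit x) := rfl
      have hgpos : (0:ℝ) < g (stoneCechUnit x) := by linarith
      rw [hfx, abs_mul, abs_of_pos hgpos] at hx2
      nlinarith [abs_nonneg (f x)]
    obtain ⟨r', hr'⟩ := fstar_of_bdd h5
    exact hfq r' hr'
  rw [show Cp p = Cp q from hpq] at hhp
  exact hhq hhp

/-- The unbounded sequence with separated values. -/
theorem exists_seq {f : C(X, ℝ)} (hf : ¬ ∃ M : ℝ, ∀ x : X, |f x| ≤ M) :
    ∃ x : ℕ → X, (∀ n : ℕ, (n : ℝ) ≤ |f (x n)|) ∧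
      (∀ n m : ℕ, n ≠ m → 2 ≤ |(|f (x n)|) - (|f (x m)|)|) := by
  have H : ∀ M : ℝ, ∃ x : X, M < |f x| := by
    intro M
    by_contra h
    push_neg at h
    exact hf ⟨M, fun x => h x⟩
  choose g hg using H
  let x : ℕ → X := fun n => Nat.rec (g 0) (fun n xn => g (max (|f xn| + 2) ((n : ℝ) + 1))) n
  have hx0 : (0 : ℝ) < |f (x 0)| := hg 0
  have hstep : ∀ n : ℕ, max (|f (x n)| + 2) ((n : ℝ) + 1) < |f (x (n + 1))| := fun n => hg _
  have hn : ∀ n : ℕ, (n : ℝ) ≤ |f (x n)| := by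
    intro n
    cases n with
    | zero => simp only [Nat.cast_zero]; exact hx0.le
    | succ n =>
      have h1 := hstep n
      have h2 : ((n : ℝ) + 1) ≤ max (|f (x n)| + 2) ((n : ℝ) + 1) := le_max_right _ _
      push_cast
      linarith
  have hmon : ∀ n m : ℕ, n < m → |f (x n)| + 2 ≤ |f (x m)| := by
    intro n m hnm
    induction m with
    | zero => omega
    | succ m ih =>
      rcases Nat.lt_succ_iff_lt_or_eq.mp hnm with h | rfl
      · have h1 := ih h
        have h2 := hstep m
        have h3 : |f (x m)| + 2 ≤ max (|f (x m)| + 2) ((m : ℝ) + 1) := le_max_left _ _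
        linarith
      · have h2 := hstep n
        have h3 : |f (x n)| + 2 ≤ max (|f (x n)| + 2) ((n : ℝ) + 1) := le_max_left _ _
        linarith
  refine ⟨x, hn, fun n m hnm => ?_⟩
  rcases lt_or_gt_of_ne hnm with h | h
  · have := hmon n m h
    rw [abs_sub_comm]
    rw [abs_of_nonneg (by linarith)]
    linarith
  · have := hmon m n h
    rw [abs_of_nonneg (by linarith)]
    linarith

/-- extension of indicator functions on the sequence -/
theorem exists_indicator {f : C(X, ℝ)} {x : ℕ → X}
    (hsep : ∀ n m : ℕ, n ≠ m → 2 ≤ |(|f (x n)|) - (|f (x m)|)|) (A : Set ℕ) :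
    ∃ h : C(X, ℝ), (∀ n ∈ A, h (x n) = 1) ∧ (∀ n ∉ A, h (x n) = 0) := by
  rcases A.eq_empty_or_nonempty with rfl | hA
  · exact ⟨0, by simp, by simp⟩
  set SA : Set ℝ := (fun n => |f (x n)|) '' A with hSA_def
  have hSA : SA.Nonempty := hA.image _
  have hφc : Continuous (fun t : ℝ => max 0 (1 - Metric.infDist t SA)) :=
    continuous_const.max (continuous_const.sub (Metric.continuous_infDist_pt SA))
  refine ⟨⟨fun y => max 0 (1 - Metric.infDist (|f y|) SA),
    hφc.comp (continuous_abs.comp f.continuous)⟩, ?_, ?_⟩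
  · intro n hn
    have h0 : Metric.infDist (|f (x n)|) SA = 0 :=
      Metric.infDist_zero_of_mem ⟨n, hn, rfl⟩
    simp only [ContinuousMap.coe_mk, h0]
    norm_num
  · intro n hn
    have h2 : ¬ Metric.infDist (|f (x n)|) SA < 2 := by
      rw [Metric.infDist_lt_iff hSA]
      rintro ⟨yv, ⟨m, hm, rfl⟩, hd⟩
      have hs := hsep n m (by rintro rfl; exact hn hm)
      rw [Real.dist_eq] at hd
      linarith
    push_neg at h2
    simp only [ContinuousMap.coe_mk]
    exact max_eq_left (by linarith)

/-- The index set for the independent family. -/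
abbrev IdxT : Type := Finset ℚ × Finset (Finset ℚ)

noncomputable def cut (F : Finset ℚ) (r : ℝ) : Finset ℚ := F.filter (fun q => (q : ℝ) < r)

def Aset (r : ℝ) : Set IdxT := {p | cut p.1 r ∈ p.2}

theorem core_infinite (S : Set ℝ) (T : Finset ℝ) :
    {p : IdxT | ∀ r ∈ T, (p ∈ Aset r ↔ r ∈ S)}.Infinite := by
  classical
  -- a finite set of rationals separating the elements of `T`
  let F₀ : Finset ℚ :=
    (T ×ˢ T).image (fun rp => if h : rp.1 < rp.2 then (exists_rat_btwn h).choose else 0)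
  have hcut_inj : ∀ r ∈ T, ∀ r' ∈ T, cut F₀ r = cut F₀ r' → r = r' := by
    have main : ∀ r ∈ T, ∀ r' ∈ T, r < r' → cut F₀ r ≠ cut F₀ r' := by
      intro r hr r' hr' hlt hEq
      have hq := (exists_rat_btwn hlt).choose_spec
      have hqF : (exists_rat_btwn hlt).choose ∈ F₀ :=
        Finset.mem_image.mpr ⟨(r, r'), Finset.mem_product.mpr ⟨hr, hr'⟩, by
          simp only [dif_pos hlt]⟩
      have h1 : (exists_rat_btwn hlt).choose ∈ cut F₀ r' :=
        Finset.mem_filter.mpr ⟨hqF, hq.2⟩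
      rw [← hEq] at h1
      exact absurd (Finset.mem_filter.mp h1).2 (not_lt.mpr hq.1.le)
    intro r hr r' hr' hEq
    by_contra hne
    rcases lt_or_gt_of_ne hne with h | h
    · exact main r hr r' hr' h hEq
    · exact main r' hr' r hr h hEq.symm
  -- a rational above everything in `T` and `F₀`
  obtain ⟨q0, hq0⟩ : ∃ q0 : ℚ, ∀ q ∈ F₀, q ≤ q0 := F₀.exists_le
  obtain ⟨B, hB⟩ : ∃ B : ℝ, ∀ r ∈ T, r ≤ B := T.exists_le
  obtain ⟨M, hM⟩ := exists_rat_gt (max (q0 : ℝ) B)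
  have hMF : ∀ q ∈ F₀, q < M := fun q hq => by
    have h1 : (q : ℝ) ≤ q0 := by exact_mod_cast hq0 q hq
    have : (q : ℝ) < M := lt_of_le_of_lt h1 (lt_of_le_of_lt (le_max_left _ _) hM)
    exact_mod_cast this
  have hMT : ∀ r ∈ T, r < (M : ℝ) := fun r hr =>
    lt_of_le_of_lt (hB r hr) (lt_of_le_of_lt (le_max_right _ _) hM)
  -- the family of finite sets
  let ext : ℕ → Finset ℚ := fun k => (Finset.range k).image (fun i : ℕ => M + (i : ℚ))
  let Fk : ℕ → Finset ℚ := fun k => F₀ ∪ ext k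
  have hext_ge : ∀ k, ∀ q ∈ ext k, M ≤ q := by
    intro k q hq
    obtain ⟨i, -, rfl⟩ := Finset.mem_image.mp hq
    have : (0 : ℚ) ≤ (i : ℚ) := Nat.cast_nonneg i
    linarith
  have hcutk : ∀ k, ∀ r ∈ T, cut (Fk k) r = cut F₀ r := by
    intro k r hr
    unfold Fk
    rw [cut, cut, Finset.filter_union]
    have : (ext k).filter (fun q : ℚ => (q : ℝ) < r) = ∅ := by
      rw [Finset.filter_eq_empty_iff]
      intro q hq
      have h1 : (M : ℝ) ≤ (q : ℝ) := by exact_mod_cast hext_ge k q hq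
      exact not_lt.mpr (le_trans (hMT r hr).le h1)
    rw [this, Finset.union_empty]
  -- the common second coordinate
  let A0 : Finset (Finset ℚ) := (T.filter (fun r => r ∈ S)).image (fun r => cut F₀ r)
  -- injectivity of k ↦ Fk k
  have hcard : ∀ k, ((Fk k).filter (fun q => M ≤ q)).card = k := by
    intro k
    have : (Fk k).filter (fun q => M ≤ q) = ext k := by
      unfold Fk
      rw [Finset.filter_union]
      have h1 : F₀.filter (fun q => M ≤ q) = ∅ := by
        rw [Finset.filter_eq_empty_iff]
        exact fun q hq => not_le.mpr (hMF q hq)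
      have h2 : (ext k).filter (fun q => M ≤ q) = ext k :=
        Finset.filter_true_of_mem (hext_ge k)
      rw [h1, h2, Finset.empty_union]
    rw [this]
    unfold ext
    rw [Finset.card_image_of_injective _
      (fun i j hij => Nat.cast_injective (add_left_cancel hij)), Finset.card_range]
  refine Set.infinite_of_injective_forall_mem
    (f := fun k : ℕ => ((Fk k, A0) : IdxT)) ?_ ?_
  · intro k l hkl
    have h1 : Fk k = Fk l := congrArg Prod.fst hkl
    have := hcard k
    rw [h1, hcard l] at this
    exact this.symm
  · intro k
    intro r hr
    constructor
    · intro hmem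
      have hmem' : cut (Fk k) r ∈ A0 := hmem
      rw [hcutk k r hr] at hmem'
      obtain ⟨r', hr', hEq⟩ := Finset.mem_image.mp hmem'
      obtain ⟨hr'T, hr'S⟩ := Finset.mem_filter.mp hr'
      exact hcut_inj r' hr'T r hr hEq ▸ hr'S
    · intro hrS
      show cut (Fk k) r ∈ A0
      rw [hcutk k r hr]
      exact Finset.mem_image.mpr ⟨r, Finset.mem_filter.mpr ⟨hr, hrS⟩, rfl⟩

theorem exists_ultra (S : Set ℝ) : ∃ u : Ultrafilter IdxT,
    ↑u ≤ (Filter.cofinite : Filter IdxT) ∧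
      ∀ r : ℝ, (r ∈ S → Aset r ∈ u) ∧ (r ∉ S → (Aset r)ᶜ ∈ u) := by
  classical
  set 𝓕 : Set (Set IdxT) :=
    {B | ∃ r : ℝ, (r ∈ S ∧ B = Aset r) ∨ (r ∉ S ∧ B = (Aset r)ᶜ)} with h𝓕
  have hNB : (Filter.generate 𝓕 ⊓ Filter.cofinite).NeBot := by
    rw [Filter.inf_neBot_iff]
    intro s hs t ht
    rw [Filter.mem_generate_iff] at hs
    obtain ⟨𝒯, h𝒯sub, h𝒯fin, h𝒯⟩ := hs
    let w : Set IdxT → ℝ := fun B =>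
      if h : ∃ r : ℝ, (r ∈ S ∧ B = Aset r) ∨ (r ∉ S ∧ B = (Aset r)ᶜ) then h.choose else 0
    let T : Finset ℝ := h𝒯fin.toFinset.image w
    have hcore := core_infinite S T
    have hsub : {p : IdxT | ∀ r ∈ T, (p ∈ Aset r ↔ r ∈ S)} ⊆ ⋂₀ 𝒯 := by
      intro p hp B hB
      have hBF : ∃ r : ℝ, (r ∈ S ∧ B = Aset r) ∨ (r ∉ S ∧ B = (Aset r)ᶜ) := h𝒯sub hB
      have hwB : w B ∈ T :=
        Finset.mem_image.mpr ⟨B, h𝒯fin.mem_toFinset.mpr hB, rfl⟩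
      have hw : w B = hBF.choose := dif_pos hBF
      have hspec := hBF.choose_spec
      rw [← hw] at hspec
      have hiff := hp (w B) hwB
      rcases hspec with ⟨hrS, hBeq⟩ | ⟨hrS, hBeq⟩
      · rw [hBeq]
        exact hiff.mpr hrS
      · rw [hBeq]
        exact fun hmem => hrS (hiff.mp hmem)
    have htfin : tᶜ.Finite := ht
    have hinf : ({p : IdxT | ∀ r ∈ T, (p ∈ Aset r ↔ r ∈ S)} \ tᶜ).Infinite :=
      hcore.diff htfin
    obtain ⟨p, hp1, hp2⟩ := hinf.nonempty
    exact ⟨p, h𝒯 (hsub hp1), Set.not_notMem.mp hp2⟩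
  obtain ⟨u, hu⟩ := Ultrafilter.exists_le (Filter.generate 𝓕 ⊓ Filter.cofinite)
  have hu1 : ↑u ≤ Filter.generate 𝓕 := hu.trans inf_le_left
  have hu2 : (↑u : Filter IdxT) ≤ Filter.cofinite := hu.trans inf_le_right
  refine ⟨u, hu2, fun r => ⟨fun hr => ?_, fun hr => ?_⟩⟩
  · exact hu1 (Filter.mem_generate_of_mem ⟨r, Or.inl ⟨hr, rfl⟩⟩)
  · exact hu1 (Filter.mem_generate_of_mem ⟨r, Or.inr ⟨hr, rfl⟩⟩)

/-- The key construction: an injection of `Set ℝ` into `(υX)ᶜ`. -/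
theorem exists_inj (hX : ∃ f : C(X, ℝ), ¬ ∃ M : ℝ, ∀ x : X, |f x| ≤ M) :
    ∃ j : Set ℝ → StoneCech X, Function.Injective j ∧ ∀ S, j S ∈ (upsilon X)ᶜ := by
  classical
  obtain ⟨f, hf⟩ := hX
  obtain ⟨x, hx1, hx2⟩ := exists_seq hf
  obtain ⟨d⟩ := nonempty_denumerable IdxT
  let e : IdxT ≃ ℕ := Denumerable.eqv IdxT
  let y : IdxT → X := fun p => x (e p)
  choose U hUcof hUmem using exists_ultra
  have hconv : ∀ S : Set ℝ, ∃ q : StoneCech X,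
      Tendsto (fun p => stoneCechUnit (y p)) (U S) (𝓝 q) := by
    intro S
    obtain ⟨q, -, hq⟩ := isCompact_univ.ultrafilter_le_nhds
      ((U S).map (fun p => stoneCechUnit (y p))) (by simp)
    exact ⟨q, hq⟩
  choose j hj using hconv
  have key : ∀ (S : Set ℝ) (h : C(X, ℝ)),
      Tendsto (fun p => ((h (y p) : ℝ) : OnePoint ℝ)) (U S) (𝓝 (fstar h (j S))) := by
    intro S h
    have hc := (continuous_stoneCechExtend
      (OnePoint.continuous_coe.comp h.continuous)).tendsto (j S)
    have h2 := hc.comp (hj S)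
    refine Tendsto.congr (fun p => ?_) h2
    exact congrFun (stoneCechExtend_extends (OnePoint.continuous_coe.comp h.continuous)) (y p)
  -- the absolute value of f, as a continuous map
  let F₁ : C(X, ℝ) := ⟨fun z => |f z|, f.continuous.abs⟩
  have hjout : ∀ S, j S ∈ (upsilon X)ᶜ := by
    intro S hmem
    obtain ⟨r, hr⟩ := hmem F₁
    have h1 : Tendsto (fun p : IdxT => ((e p : ℕ) : ℝ)) (U S) atTop := by
      have he : Tendsto e (Filter.cofinite : Filter IdxT) atTop :=
        Nat.cofinite_eq_atTop ▸ e.injective.tendsto_cofinite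
      exact tendsto_natCast_atTop_atTop.comp (he.mono_left (hUcof S))
    have h2 : Tendsto (fun p => F₁ (y p)) (U S) atTop :=
      tendsto_atTop_mono (fun p => hx1 (e p)) h1
    have h3 : Tendsto (fun t : ℝ => (t : OnePoint ℝ)) atTop (𝓝 (OnePoint.infty)) := by
      refine OnePoint.tendsto_coe_infty.mono_left ?_
      rw [Filter.coclosedCompact_eq_cocompact, cocompact_eq_atBot_atTop]
      exact le_sup_right
    have hInf : Tendsto (fun p => ((F₁ (y p) : ℝ) : OnePoint ℝ)) (U S) (𝓝 OnePoint.infty) :=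
      h3.comp h2
    have := tendsto_nhds_unique (key S F₁) hInf
    rw [hr] at this
    exact OnePoint.coe_ne_infty r this
  refine ⟨j, ?_, hjout⟩
  have main : ∀ S S' : Set ℝ, j S = j S' → ∀ r : ℝ, r ∈ S → r ∉ S' → False := by
    intro S S' hjeq r hrS hrS'
    have hA : Aset r ∈ U S := (hUmem S r).1 hrS
    have hAc : (Aset r)ᶜ ∈ U S' := (hUmem S' r).2 hrS'
    obtain ⟨h, hh1, hh0⟩ := exists_indicator hx2 (e '' Aset r)
    have e1 : fstar h (j S) = ((1 : ℝ) : OnePoint ℝ) := by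
      refine tendsto_nhds_unique (key S h) ?_
      refine Tendsto.congr' ?_ (tendsto_const_nhds (x := ((1:ℝ) : OnePoint ℝ)))
      filter_upwards [Ultrafilter.mem_coe.mpr hA] with p hp
      rw [hh1 (e p) ⟨p, hp, rfl⟩]
    have e0 : fstar h (j S') = ((0 : ℝ) : OnePoint ℝ) := by
      refine tendsto_nhds_unique (key S' h) ?_
      refine Tendsto.congr' ?_ (tendsto_const_nhds (x := ((0:ℝ) : OnePoint ℝ)))
      filter_upwards [Ultrafilter.mem_coe.mpr hAc] with p hp
      rw [hh0 (e p) (fun ⟨p', hp', hpe⟩ => hp (e.injective hpe ▸ hp'))]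
    rw [hjeq, e0] at e1
    have : (0 : ℝ) = 1 := OnePoint.coe_injective e1
    norm_num at this
  intro S S' hSS
  by_contra hne
  have hex : ∃ r : ℝ, (r ∈ S ∧ r ∉ S') ∨ (r ∈ S' ∧ r ∉ S) := by
    by_contra hc
    push_neg at hc
    exact hne (Set.ext fun r => ⟨fun h => (hc r).1 h, fun h => (hc r).2 h⟩)
  obtain ⟨r, ⟨h1, h2⟩ | ⟨h1, h2⟩⟩ := hex
  · exact main S S' hSS r h1 h2
  · exact main S' S hSS.symm r h1 h2

end Stmt4Aux

open Stmt4Aux in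
/-- If `X` is a completely regular Hausdorff space which is not pseudocompact
(`C*(X) ⊊ C(X)`), then the map `p ↦ C_p` is injective on `βX \ υX`, the latter set has
cardinality at least `2^𝔠`, and the family `Σ(X)` of intermediate rings between `C*(X)` and
`C(X)` has at least `2^𝔠` distinct members. -/
theorem statement4 [T2Space X] [CompletelyRegularSpace X]
    (hX : ∃ f : C(X, ℝ), ¬ ∃ M : ℝ, ∀ x : X, |f x| ≤ M) :
    Set.InjOn (fun p : StoneCech X => Cp p) ((upsilon X)ᶜ) ∧
    2 ^ Cardinal.continuum ≤ Cardinal.mk ((upsilon X)ᶜ : Set (StoneCech X)) ∧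
    2 ^ Cardinal.continuum ≤ Cardinal.mk
      {S : Set C(X, ℝ) | (∃ R : Subring C(X, ℝ), (R : Set C(X, ℝ)) = S) ∧
        ∀ f : C(X, ℝ), (∃ M : ℝ, ∀ x : X, |f x| ≤ M) → f ∈ S} := by
  obtain ⟨j, hjinj, hjmem⟩ := exists_inj hX
  have h2 : 2 ^ Cardinal.continuum ≤ Cardinal.mk ((upsilon X)ᶜ : Set (StoneCech X)) := by
    have hemb : Nonempty (Set ℝ ↪ ((upsilon X)ᶜ : Set (StoneCech X))) :=
      ⟨⟨fun S => ⟨j S, hjmem S⟩, fun S S' h => hjinj (by simpa using congrArg Subtype.val h)⟩⟩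
    have := Cardinal.lift_mk_le'.mpr hemb
    rw [Cardinal.mk_set, Cardinal.mk_real, Cardinal.lift_two_power, Cardinal.lift_continuum] at this
    simpa using this
  refine ⟨injOn_Cp, h2, ?_⟩
  refine le_trans h2 ?_
  have hemb : Nonempty (((upsilon X)ᶜ : Set (StoneCech X)) ↪
      {S : Set C(X, ℝ) | (∃ R : Subring C(X, ℝ), (R : Set C(X, ℝ)) = S) ∧
        ∀ f : C(X, ℝ), (∃ M : ℝ, ∀ x : X, |f x| ≤ M) → f ∈ S}) := by
    refine ⟨⟨fun p => ⟨Cp p.1, ⟨CpSubring p.1, rfl⟩, fun f hf => bdd_mem_Cp hf⟩, ?_⟩⟩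
    rintro ⟨p, hp⟩ ⟨q, hq⟩ h
    have : Cp p = Cp q := by simpa using congrArg Subtype.val h
    exact Subtype.ext (injOn_Cp hp hq this)
  exact Cardinal.mk_le_of_injective hemb.some.injective
end

section
/- If X is a completely regular Hausdorff space that is not pseudocompact, then βX \ υX contains a homeomorphic copy of βℕ \ ℕ, and consequently |βX \ υX| ≥ 2^c. -/
open Filter Set

private lemma exists_many_free_ultrafilters :
    ∃ J : Set ℝ → Ultrafilter ℕ, Function.Injective J ∧
      ∀ σ : Set ℝ, (J σ : Filter ℕ) ≤ cofinite := by
  classical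
  haveI : Denumerable (Finset ℚ × Finset (Finset ℚ)) :=
    Denumerable.ofEncodableOfInfinite _
  set ε : Finset ℚ × Finset (Finset ℚ) ≃ ℕ := Denumerable.eqv _ with hε
  set A : ℝ → Set ℕ := fun r =>
    {n | (ε.symm n).1.filter (fun q : ℚ => (q : ℝ) < r) ∈ (ε.symm n).2} with hA
  -- separating rationals
  set qf : ℝ → ℝ → ℚ := fun a b => if h : a < b then (exists_rat_btwn h).choose else 0 with hqf
  have hqf1 : ∀ a b : ℝ, a < b → a < qf a b ∧ (qf a b : ℝ) < b := by
    intro a b h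
    simp only [hqf, dif_pos h]
    exact (exists_rat_btwn h).choose_spec
  -- key combinatorial fact
  have key : ∀ (T : Finset ℝ) (σ : Set ℝ),
      {n : ℕ | ∀ r ∈ T, (n ∈ A r ↔ r ∈ σ)}.Infinite := by
    intro T σ
    set F0 : Finset ℚ := (T ×ˢ T).image (fun p => qf p.1 p.2) with hF0
    set K : ℕ := F0.sup (fun q => ⌈|q|⌉₊) with hK
    set c : ℕ → ℚ := fun m => ((K + 1 + m : ℕ) : ℚ) with hc
    have hcF0 : ∀ m, c m ∉ F0 := by
      intro m hm
      have h1 : ⌈|c m|⌉₊ ≤ K := Finset.le_sup (f := fun q => ⌈|q|⌉₊) hm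
      have h2 : |c m| ≤ (K : ℚ) := le_trans (Nat.le_ceil _) (by exact_mod_cast h1)
      have h3 : c m ≤ (K : ℚ) := le_trans (le_abs_self _) h2
      have h4 : ((K : ℚ) + 1 : ℚ) ≤ c m := by
        simp only [hc]
        push_cast
        linarith [Nat.cast_nonneg (α := ℚ) m]
      linarith
    have hcinj : Function.Injective c := by
      intro m m' h
      simp only [hc] at h
      have h' : (K + 1 + m : ℕ) = (K + 1 + m' : ℕ) := by exact_mod_cast h
      omega
    set filt : Finset ℚ → ℝ → Finset ℚ := fun F r => F.filter (fun q : ℚ => (q : ℝ) < r) with hfilt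
    set Fm : ℕ → Finset ℚ := fun m => insert (c m) F0 with hFm
    have hsep : ∀ (m : ℕ), ∀ a ∈ T, ∀ b ∈ T, a ≠ b → filt (Fm m) a ≠ filt (Fm m) b := by
      have main : ∀ (m : ℕ), ∀ a ∈ T, ∀ b ∈ T, a < b → filt (Fm m) a ≠ filt (Fm m) b := by
        intro m a ha b hb hab he
        have hq := hqf1 a b hab
        have hmem : qf a b ∈ Fm m :=
          Finset.mem_insert_of_mem (Finset.mem_image.2 ⟨(a, b), Finset.mem_product.2 ⟨ha, hb⟩, rfl⟩)
        have h1 : qf a b ∈ filt (Fm m) b := Finset.mem_filter.2 ⟨hmem, hq.2⟩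
        have h2 : qf a b ∉ filt (Fm m) a := by
          intro hc2
          exact absurd (Finset.mem_filter.1 hc2).2 (not_lt.2 (le_of_lt hq.1))
        rw [← he] at h1
        exact h2 h1
      intro m a ha b hb hab
      rcases hab.lt_or_gt with h | h
      · exact main m a ha b hb h
      · exact fun he => main m b hb a ha h he.symm
    set Am : ℕ → Finset (Finset ℚ) := fun m => (T.filter (· ∈ σ)).image (fun r => filt (Fm m) r) with hAm
    set bm : ℕ → Finset ℚ × Finset (Finset ℚ) := fun m => (Fm m, Am m) with hbm
    have hinj : Function.Injective (fun m => ε (bm m)) := by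
      intro m m' h
      have hb : bm m = bm m' := ε.injective h
      have hcm : c m ∈ Fm m' := by
        have : Fm m = Fm m' := congrArg Prod.fst hb
        rw [← this]
        exact Finset.mem_insert_self _ _
      rcases Finset.mem_insert.1 hcm with h' | h'
      · exact hcinj h'
      · exact absurd h' (hcF0 m)
    apply Set.infinite_of_injective_forall_mem hinj
    intro m
    simp only [Set.mem_setOf_eq]
    intro r hr
    have hsymm : ε.symm (ε (bm m)) = bm m := ε.symm_apply_apply _
    simp only [hA, Set.mem_setOf_eq, hsymm]
    constructor
    · intro hmem
      obtain ⟨r', hr', he⟩ := Finset.mem_image.1 hmem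
      obtain ⟨hr'T, hr'σ⟩ := Finset.mem_filter.1 hr'
      by_contra hrσ
      have hne : r' ≠ r := fun h => hrσ (h ▸ hr'σ)
      exact hsep m r' hr'T r hr hne he
    · intro hrσ
      exact Finset.mem_image.2 ⟨r, Finset.mem_filter.2 ⟨hr, hrσ⟩, rfl⟩
  set g : Set ℝ → ℝ → Set ℕ := fun σ r => if r ∈ σ then A r else (A r)ᶜ with hg
  have hginf : ∀ (σ : Set ℝ) (T : Finset ℝ), {n : ℕ | ∀ r ∈ T, n ∈ g σ r}.Infinite := by
    intro σ T
    refine (key T σ).mono ?_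
    intro n hn r hr
    simp only [hg]
    by_cases hrσ : r ∈ σ
    · rw [if_pos hrσ]
      exact (hn r hr).2 hrσ
    · rw [if_neg hrσ]
      exact fun hmem => hrσ ((hn r hr).1 hmem)
  have hne : ∀ σ : Set ℝ, ((⨅ r : ℝ, 𝓟 (g σ r)) ⊓ cofinite).NeBot := by
    intro σ
    rw [Filter.inf_neBot_iff]
    intro s hs s' hs'
    rw [Filter.mem_iInf_finite] at hs
    obtain ⟨T, hT⟩ := hs
    rw [Filter.iInf_principal_finset, Filter.mem_principal] at hT
    have hsub : {n : ℕ | ∀ r ∈ T, n ∈ g σ r} ⊆ s := fun n hn => hT (Set.mem_iInter₂.2 hn)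
    have hfin : s'ᶜ.Finite := hs'
    have hinf2 : ({n : ℕ | ∀ r ∈ T, n ∈ g σ r} \ s'ᶜ).Infinite := (hginf σ T).diff hfin
    refine Set.Infinite.nonempty (hinf2.mono ?_)
    intro n hn
    exact ⟨hsub hn.1, Set.notMem_compl_iff.1 hn.2⟩
  set J : Set ℝ → Ultrafilter ℕ := fun σ => @Ultrafilter.of ℕ _ (hne σ) with hJ
  have hle : ∀ σ, (J σ : Filter ℕ) ≤ (⨅ r : ℝ, 𝓟 (g σ r)) ⊓ cofinite := fun σ => Ultrafilter.of_le _
  have hiff : ∀ σ r, A r ∈ J σ ↔ r ∈ σ := by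
    intro σ r
    constructor
    · intro hmem
      by_contra hrσ
      have h1 : g σ r ∈ (⨅ r : ℝ, 𝓟 (g σ r)) := Filter.mem_iInf_of_mem r (Filter.mem_principal_self _)
      have h2 : (A r)ᶜ ∈ J σ := by
        have := ((hle σ).trans inf_le_left) h1
        have h3 : g σ r = (A r)ᶜ := by simp only [hg]; rw [if_neg hrσ]
        rwa [Ultrafilter.mem_coe, h3] at this
      exact Ultrafilter.compl_mem_iff_notMem.1 h2 hmem
    · intro hrσ
      have h1 : g σ r ∈ (⨅ r : ℝ, 𝓟 (g σ r)) := Filter.mem_iInf_of_mem r (Filter.mem_principal_self _)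
      have := ((hle σ).trans inf_le_left) h1
      have h3 : g σ r = A r := by simp only [hg]; rw [if_pos hrσ]
      rwa [Ultrafilter.mem_coe, h3] at this
  refine ⟨J, ?_, fun σ => (hle σ).trans inf_le_right⟩
  intro σ σ' h
  ext r
  rw [← hiff σ r, ← hiff σ' r, h]

private noncomputable def toSC (u : Ultrafilter ℕ) : StoneCech ℕ :=
  T2Quotient.mk (Quot.mk _ u : PreStoneCech ℕ)

private lemma toSC_extend {γ : Type} [TopologicalSpace γ] [T2Space γ] [CompactSpace γ]
    {f : ℕ → γ} (hf : Continuous f) (u : Ultrafilter ℕ) :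
    stoneCechExtend hf (toSC u) = Ultrafilter.extend f u := by
  rw [stoneCechExtend, toSC]
  rfl

private lemma toSC_injective : Function.Injective toSC := by
  intro u v h
  by_contra huv
  have hnle : ¬ (v : Filter ℕ) ≤ (u : Filter ℕ) := fun hle =>
    huv (Ultrafilter.coe_le_coe.1 hle).symm
  rw [Filter.le_def] at hnle
  push_neg at hnle
  obtain ⟨A, hAu, hAv⟩ := hnle
  have hAcv : Aᶜ ∈ v := Ultrafilter.compl_mem_iff_notMem.2 hAv
  classical
  set gb : ℕ → Bool := fun n => decide (n ∈ A) with hgb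
  have hgbc : Continuous gb := continuous_of_discreteTopology
  have hTrue : Ultrafilter.extend gb u = true := by
    rw [ultrafilter_extend_eq_iff, nhds_discrete, Ultrafilter.coe_map, Filter.le_pure_iff,
      Filter.mem_map]
    refine Filter.mem_of_superset hAu ?_
    intro n hn
    simp [hgb, hn]
  have hFalse : Ultrafilter.extend gb v = false := by
    rw [ultrafilter_extend_eq_iff, nhds_discrete, Ultrafilter.coe_map, Filter.le_pure_iff,
      Filter.mem_map]
    refine Filter.mem_of_superset hAcv ?_
    intro n hn
    simp only [Set.mem_compl_iff] at hn
    simp [hgb, hn]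
  have hc : Ultrafilter.extend gb u = Ultrafilter.extend gb v := by
    rw [← toSC_extend hgbc, ← toSC_extend hgbc, h]
  rw [hTrue, hFalse] at hc
  simp at hc

private lemma toSC_not_unit {u : Ultrafilter ℕ} (hu : (u : Filter ℕ) ≤ cofinite) :
    toSC u ∉ Set.range (stoneCechUnit : ℕ → StoneCech ℕ) := by
  rintro ⟨n, hn⟩
  have hun : stoneCechUnit n = toSC (pure n) := rfl
  rw [hun] at hn
  have hpu : (pure n : Ultrafilter ℕ) = u := toSC_injective hn
  have h1 : {n}ᶜ ∈ u := hu (by simp [Filter.mem_cofinite])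
  have h2 : {n} ∈ u := by
    rw [← hpu]
    exact Filter.singleton_mem_pure
  exact (Ultrafilter.compl_mem_iff_notMem.1 h1) h2
open Filter Topology

variable {X : Type*} [TopologicalSpace X]

/-- If `X` is a completely regular Hausdorff space which is not pseudocompact, then
`βX \ υX` contains a homeomorphic copy of `βℕ \ ℕ`, and consequently
`|βX \ υX| ≥ 2^𝔠`. -/
theorem statement5 [T2Space X] [CompletelyRegularSpace X]
    (hX : ∃ f : C(X, ℝ), ¬ ∃ M : ℝ, ∀ x : X, |f x| ≤ M) :
    (∃ e : ((Set.range (stoneCechUnit : ℕ → StoneCech ℕ))ᶜ : Set (StoneCech ℕ)) →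
        ((upsilon X)ᶜ : Set (StoneCech X)), Topology.IsEmbedding e) ∧
    2 ^ Cardinal.continuum ≤ Cardinal.mk ((upsilon X)ᶜ : Set (StoneCech X)) := by
  classical
  obtain ⟨f, hfub⟩ := hX
  push_neg at hfub
  choose w hw using hfub
  set F : X → ℝ := fun y => |f y| with hF
  have hFc : Continuous F := f.continuous.abs
  set x : ℕ → X := fun n => Nat.rec (w 0) (fun n xn => w (max ((n : ℝ) + 1) (F xn + 2))) n with hx
  have hx0 : x 0 = w 0 := rfl
  have hxs : ∀ n, x (n + 1) = w (max ((n : ℝ) + 1) (F (x n) + 2)) := fun n => rfl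
  set s : ℕ → ℝ := fun n => F (x n) with hs
  have hsF : ∀ n, F (x n) = s n := fun _ => rfl
  have hsn : ∀ n : ℕ, (n : ℝ) < s n := by
    intro n
    induction n with
    | zero =>
      have := hw 0
      simp only [hs, hx0, hF]
      exact_mod_cast this
    | succ n ih =>
      have h1 := hw (max ((n : ℝ) + 1) (F (x n) + 2))
      have h2 : ((n + 1 : ℕ) : ℝ) ≤ max ((n : ℝ) + 1) (F (x n) + 2) := by
        push_cast
        exact le_max_left _ _
      have h3 : s (n + 1) = |f (w (max ((n : ℝ) + 1) (F (x n) + 2)))| := rfl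
      rw [h3]
      exact lt_of_le_of_lt h2 h1
  have hstep : ∀ n, s n + 2 < s (n + 1) := by
    intro n
    have h1 := hw (max ((n : ℝ) + 1) (F (x n) + 2))
    have h2 : F (x n) + 2 ≤ max ((n : ℝ) + 1) (F (x n) + 2) := le_max_right _ _
    have h3 : s (n + 1) = |f (w (max ((n : ℝ) + 1) (F (x n) + 2)))| := rfl
    rw [h3, ← hsF n]
    linarith
  have hgap : ∀ m n, m < n → s m + 2 < s n := by
    intro m n h
    induction n with
    | zero => omega
    | succ n ih =>
      rcases Nat.lt_succ_iff_lt_or_eq.1 h with h' | h'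
      · have := hstep n
        linarith [ih h']
      · subst h'
        exact hstep m
  have hdist : ∀ m n, m ≠ n → 2 ≤ dist (s m) (s n) := by
    intro m n hmn
    rw [Real.dist_eq]
    rcases hmn.lt_or_gt with h | h
    · have := hgap m n h
      rw [abs_sub_comm]
      exact le_trans (by linarith) (le_abs_self _)
    · have := hgap n m h
      exact le_trans (by linarith) (le_abs_self _)
  -- the indicator-interpolating functions
  have hphi : ∀ A : Set ℕ, ∃ φ : X → ℝ, Continuous φ ∧ (∀ y, φ y ∈ Set.Icc (0:ℝ) 1) ∧
      ∀ n, φ (x n) = if n ∈ A then 1 else 0 := by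
    intro A
    rcases A.eq_empty_or_nonempty with rfl | ⟨a, ha⟩
    · exact ⟨fun _ => 0, continuous_const, fun y => ⟨le_refl 0, zero_le_one⟩, fun n => by simp⟩
    · refine ⟨fun y => max 0 (1 - Metric.infDist (F y) (s '' A)), ?_, ?_, ?_⟩
      · exact continuous_const.max
          (continuous_const.sub ((Metric.continuous_infDist_pt _).comp hFc))
      · intro y
        refine ⟨le_max_left _ _, max_le zero_le_one ?_⟩
        linarith [Metric.infDist_nonneg (x := F y) (s := s '' A)]
      · intro n
        by_cases hn : n ∈ A
        · rw [if_pos hn]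
          show max 0 (1 - Metric.infDist (s n) (s '' A)) = 1
          have h0 : Metric.infDist (s n) (s '' A) = 0 :=
            Metric.infDist_zero_of_mem ⟨n, hn, rfl⟩
          rw [h0]
          norm_num
        · rw [if_neg hn]
          show max 0 (1 - Metric.infDist (s n) (s '' A)) = 0
          have hne : (s '' A).Nonempty := ⟨s a, a, ha, rfl⟩
          have h2 : ¬ Metric.infDist (s n) (s '' A) < 2 := by
            rw [Metric.infDist_lt_iff hne]
            rintro ⟨y, ⟨k, hk, rfl⟩, hlt⟩
            exact absurd hlt (not_lt.2 (hdist n k (fun h => hn (h ▸ hk))))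
          have h2' : 2 ≤ Metric.infDist (s n) (s '' A) := not_lt.1 h2
          exact max_eq_left (by linarith)
  -- the extension h : βℕ → βX
  have hux : Continuous (fun n : ℕ => stoneCechUnit (x n)) := continuous_of_discreteTopology
  set h : StoneCech ℕ → StoneCech X := stoneCechExtend hux with hhdef
  have hhc : Continuous h := continuous_stoneCechExtend _
  have hunit : ∀ n, h (stoneCechUnit n) = stoneCechUnit (x n) :=
    fun n => congrFun (stoneCechExtend_extends hux) n
  -- injectivity of h
  have hinj : Function.Injective h := by
    intro p q hpq
    by_contra hne
    obtain ⟨γ, hγ0, hγ1, hγI⟩ :=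
      exists_continuous_zero_one_of_isClosed (isClosed_singleton (x := p))
        (isClosed_singleton (x := q)) (Set.disjoint_singleton.2 hne)
    have hγp : γ p = 0 := hγ0 (Set.mem_singleton _)
    have hγq : γ q = 1 := hγ1 (Set.mem_singleton _)
    set A₁ : Set ℕ := {k | 1/3 ≤ γ (stoneCechUnit k)} with hA₁
    set A₂ : Set ℕ := {k | 2/3 ≤ γ (stoneCechUnit k)} with hA₂
    obtain ⟨φ₁, hφ₁c, hφ₁I, hφ₁v⟩ := hphi A₁
    obtain ⟨φ₂, hφ₂c, hφ₂I, hφ₂v⟩ := hphi A₂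
    set ψ₁ : X → Set.Icc (0:ℝ) 1 := fun y => ⟨φ₁ y, hφ₁I y⟩ with hψ₁
    set ψ₂ : X → Set.Icc (0:ℝ) 1 := fun y => ⟨φ₂ y, hφ₂I y⟩ with hψ₂
    have hψ₁c : Continuous ψ₁ := hφ₁c.subtype_mk _
    have hψ₂c : Continuous ψ₂ := hφ₂c.subtype_mk _
    set G : StoneCech ℕ → ℝ := fun z =>
      (Subtype.val (stoneCechExtend hψ₁c (h z)) + Subtype.val (stoneCechExtend hψ₂c (h z))) / 2
      with hGdef
    have hGc : Continuous G := by
      apply Continuous.div_const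
      exact (continuous_subtype_val.comp ((continuous_stoneCechExtend hψ₁c).comp hhc)).add
        (continuous_subtype_val.comp ((continuous_stoneCechExtend hψ₂c).comp hhc))
    have hbound : ∀ z, |γ z - G z| ≤ 1/3 := by
      have hCc : IsClosed {z : StoneCech ℕ | |γ z - G z| ≤ 1/3} :=
        isClosed_le ((γ.continuous.sub hGc).abs) continuous_const
      have hrange : Set.range (stoneCechUnit : ℕ → StoneCech ℕ) ⊆
          {z : StoneCech ℕ | |γ z - G z| ≤ 1/3} := by
        rintro _ ⟨n, rfl⟩
        have hΓ1 : Subtype.val (stoneCechExtend hψ₁c (h (stoneCechUnit n))) = φ₁ (x n) := by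
          rw [hunit n]
          exact congrArg Subtype.val (congrFun (stoneCechExtend_extends hψ₁c) (x n))
        have hΓ2 : Subtype.val (stoneCechExtend hψ₂c (h (stoneCechUnit n))) = φ₂ (x n) := by
          rw [hunit n]
          exact congrArg Subtype.val (congrFun (stoneCechExtend_extends hψ₂c) (x n))
        have hGn : G (stoneCechUnit n) =
            ((if n ∈ A₁ then (1:ℝ) else 0) + (if n ∈ A₂ then (1:ℝ) else 0)) / 2 := by
          rw [hGdef]
          simp only [hΓ1, hΓ2, hφ₁v n, hφ₂v n]
        have hIcc := hγI (stoneCechUnit n)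
        obtain ⟨hu0, hu1⟩ := hIcc
        simp only [Set.mem_setOf_eq, hGn]
        by_cases h13 : (1:ℝ)/3 ≤ γ (stoneCechUnit n)
        · by_cases h23 : (2:ℝ)/3 ≤ γ (stoneCechUnit n)
          · rw [if_pos (show n ∈ A₁ from h13), if_pos (show n ∈ A₂ from h23), abs_le]
            constructor <;> linarith
          · rw [if_pos (show n ∈ A₁ from h13), if_neg (show n ∉ A₂ from h23), abs_le]
            push_neg at h23
            constructor <;> linarith
        · have h23 : ¬ (2:ℝ)/3 ≤ γ (stoneCechUnit n) := by
            push_neg at h13 ⊢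
            linarith
          rw [if_neg (show n ∉ A₁ from h13), if_neg (show n ∉ A₂ from h23), abs_le]
          push_neg at h13
          constructor <;> linarith
      intro z
      refine hCc.closure_subset_iff.2 hrange ?_
      rw [denseRange_stoneCechUnit.closure_range]
      trivial
    have hGpq : G p = G q := by
      rw [hGdef]
      simp only [hpq]
    have b1 := hbound p
    have b2 := hbound q
    rw [hγp, abs_le] at b1
    rw [hγq, abs_le] at b2
    obtain ⟨b1l, b1r⟩ := b1
    obtain ⟨b2l, b2r⟩ := b2
    linarith [hGpq]
  -- h maps the complement of ℕ outside of υX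
  set Fc : C(X, ℝ) := ⟨F, hFc⟩ with hFcdef
  have hfstar : ∀ y : X, fstar Fc (stoneCechUnit y) = ((F y : ℝ) : OnePoint ℝ) :=
    fun y => congrFun (stoneCechExtend_extends (OnePoint.continuous_coe.comp Fc.continuous)) y
  have hout : ∀ p : StoneCech ℕ, p ∉ Set.range (stoneCechUnit : ℕ → StoneCech ℕ) →
      h p ∈ (upsilon X)ᶜ := by
    intro p hp hmem
    obtain ⟨r, hr⟩ := hmem Fc
    have hk : ∀ N : ℕ, fstar Fc (h p) ∈ ((OnePoint.some '' Set.Iio ((N : ℝ)))ᶜ) := by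
      intro N
      have hclosed : IsClosed ((OnePoint.some '' Set.Iio ((N : ℝ)))ᶜ) :=
        (OnePoint.isOpenEmbedding_coe.isOpenMap _ isOpen_Iio).isClosed_compl
      have hsplit : Set.range (stoneCechUnit : ℕ → StoneCech ℕ) =
          stoneCechUnit '' {n : ℕ | n < N} ∪ stoneCechUnit '' {n : ℕ | N ≤ n} := by
        rw [← Set.image_union,
          show {n : ℕ | n < N} ∪ {n : ℕ | N ≤ n} = Set.univ by ext n; simp; omega,
          Set.image_univ]
      have hpcl : p ∈ closure (stoneCechUnit '' {n : ℕ | N ≤ n}) := by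
        have h2 : p ∈ closure (Set.range (stoneCechUnit : ℕ → StoneCech ℕ)) := by
          rw [denseRange_stoneCechUnit.closure_range]
          trivial
        have hfin : (stoneCechUnit '' {n : ℕ | n < N}).Finite :=
          Set.Finite.image _ (Set.finite_Iio N)
        rw [hsplit, closure_union, hfin.isClosed.closure_eq] at h2
        rcases h2 with h2 | h2
        · exact absurd (Set.image_subset_range _ _ h2) hp
        · exact h2
      have hkc : Continuous (fun z : StoneCech ℕ => fstar Fc (h z)) :=
        (continuous_stoneCechExtend _).comp hhc
      have hcl2 : fstar Fc (h p) ∈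
          closure ((fun z : StoneCech ℕ => fstar Fc (h z)) '' (stoneCechUnit '' {n : ℕ | N ≤ n})) :=
        image_closure_subset_closure_image hkc (Set.mem_image_of_mem _ hpcl)
      refine hclosed.closure_subset_iff.2 ?_ hcl2
      rintro _ ⟨_, ⟨n, hn, rfl⟩, rfl⟩
      intro hmem2
      obtain ⟨t, ht, hte⟩ := hmem2
      have hv : fstar Fc (h (stoneCechUnit n)) = ((F (x n) : ℝ) : OnePoint ℝ) := by
        rw [hunit n]
        exact hfstar (x n)
      have ht2 : t = F (x n) := OnePoint.coe_injective (hte.trans hv)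
      have hlt : (n : ℝ) < t := by
        rw [ht2, hsF n]
        exact hsn n
      have hNn : (N : ℝ) ≤ (n : ℝ) := by exact_mod_cast hn
      rw [Set.mem_Iio] at ht
      linarith
    have := hk (⌈r⌉₊ + 1)
    apply this
    refine ⟨r, ?_, hr.symm⟩
    rw [Set.mem_Iio]
    push_cast
    linarith [Nat.le_ceil r]
  have hemb : Topology.IsEmbedding h := (hhc.isClosedEmbedding hinj).isEmbedding
  constructor
  · exact ⟨Set.codRestrict (h ∘ Subtype.val) _ (fun z => hout z.1 z.2),
      (hemb.comp Topology.IsEmbedding.subtypeVal).codRestrict _ _⟩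
  · obtain ⟨J, hJinj, hJle⟩ := exists_many_free_ultrafilters
    have hEinj : Function.Injective (fun σ : ULift (Set ℝ) =>
        (⟨h (toSC (J σ.down)), hout _ (toSC_not_unit (hJle σ.down))⟩ :
          ((upsilon X)ᶜ : Set (StoneCech X)))) := by
      intro a b hab
      have h1 : h (toSC (J a.down)) = h (toSC (J b.down)) := congrArg Subtype.val hab
      exact ULift.down_injective (hJinj (toSC_injective (hinj h1)))
    have hcard := Cardinal.mk_le_of_injective hEinj
    rw [Cardinal.mk_uLift, Cardinal.mk_set, Cardinal.mk_real, Cardinal.lift_two_power,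
      Cardinal.lift_continuum] at hcard
    exact hcard
end

section
/- If X is a first countable completely regular Hausdorff space and {U_n}_{n=1}^∞ is a countable local base at a point x in X, then {cl_{βX} U_n : n ∈ ℕ} is a countable local base at x in the space βX; hence βX is first countable at every point of X. -/
open Filter Topology Set

lemma nhds_eq_comap_stoneCechUnit {X : Type*} [TopologicalSpace X] [T2Space X]
    [CompletelyRegularSpace X] (x : X) :
    𝓝 x = Filter.comap stoneCechUnit (𝓝 (stoneCechUnit x)) := by
  refine le_antisymm (continuous_stoneCechUnit.tendsto x).le_comap ?_
  intro s hs
  obtain ⟨f, hf, hfx, hfK⟩ := CompletelyRegularSpace.completely_regular x (interior s)ᶜ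
    isOpen_interior.isClosed_compl (by simp [mem_interior_iff_mem_nhds.2 hs])
  refine mem_comap.2 ⟨stoneCechExtend hf ⁻¹' {1}ᶜ, ?_, ?_⟩
  · refine IsOpen.mem_nhds (isClosed_singleton.preimage (continuous_stoneCechExtend hf)).isOpen_compl ?_
    have : stoneCechExtend hf (stoneCechUnit x) = f x :=
      congrFun (stoneCechExtend_extends hf) x
    simp [this, hfx]
  · intro y hy
    simp only [mem_preimage, mem_compl_iff, mem_singleton_iff] at hy
    have : stoneCechExtend hf (stoneCechUnit y) = f y :=
      congrFun (stoneCechExtend_extends hf) y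
    rw [this] at hy
    by_contra hys
    have hyK : y ∈ (interior s)ᶜ := fun h => hys (interior_subset h)
    exact hy (hfK hyK)

lemma isDenseInducing_stoneCechUnit' {X : Type*} [TopologicalSpace X] [T2Space X]
    [CompletelyRegularSpace X] :
    IsDenseInducing (stoneCechUnit : X → StoneCech X) :=
  ⟨isInducing_iff_nhds.2 fun x => nhds_eq_comap_stoneCechUnit x,
    denseRange_stoneCechUnit⟩

/-- If `X` is a first countable completely regular Hausdorff space and `(U n)` is a countable
local base at `x ∈ X`, then the closures `cl_{βX} U n` form a countable local base at `x` in
`βX`; hence `βX` is first countable at every point of `X`. -/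
theorem statement6 {X : Type*} [TopologicalSpace X] [T2Space X] [CompletelyRegularSpace X]
    [FirstCountableTopology X] (x : X) (U : ℕ → Set X)
    (hU : (𝓝 x).HasBasis (fun _ : ℕ => True) U) :
    (𝓝 (stoneCechUnit x)).HasBasis (fun _ : ℕ => True)
      (fun n => closure (stoneCechUnit '' U n)) ∧
    ∀ y : X, (𝓝 (stoneCechUnit y)).IsCountablyGenerated := by
  have key : ∀ y : X, (U' : ℕ → Set X) → (𝓝 y).HasBasis (fun _ : ℕ => True) U' →
      (𝓝 (stoneCechUnit y)).HasBasis (fun _ : ℕ => True)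
        (fun n => closure (stoneCechUnit '' U' n)) := by
    intro y U' hU'
    refine Filter.hasBasis_iff.2 fun s => ⟨fun hs => ?_, fun ⟨n, _, hn⟩ => ?_⟩
    · -- βX is regular (compact T2)
      obtain ⟨C, ⟨hC, hCc⟩, hCs⟩ := ((closed_nhds_basis (stoneCechUnit y)).mem_iff).1 hs
      have hpre : stoneCechUnit ⁻¹' C ∈ 𝓝 y :=
        continuous_stoneCechUnit.continuousAt.preimage_mem_nhds hC
      obtain ⟨n, -, hn⟩ := (hU'.mem_iff).1 hpre
      refine ⟨n, trivial, ?_⟩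
      calc closure (stoneCechUnit '' U' n) ⊆ closure C :=
            closure_mono (by rintro _ ⟨z, hz, rfl⟩; exact hn hz)
        _ = C := hCc.closure_eq
        _ ⊆ s := hCs
    · exact mem_of_superset
        (isDenseInducing_stoneCechUnit'.closure_image_mem_nhds (hU'.mem_of_mem trivial)) hn
  refine ⟨key x U hU, fun y => ?_⟩
  obtain ⟨V, hV⟩ := (𝓝 y).exists_antitone_basis
  exact HasBasis.isCountablyGenerated
    (key y V (hV.1.to_hasBasis (fun n _ => ⟨n, trivial, subset_rfl⟩)
      (fun n _ => ⟨n, trivial, subset_rfl⟩)))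
end

section
/- If X is a first countable completely regular Hausdorff space, then every homeomorphism φ of βX onto itself maps X onto X, i.e., φ(X) = X; this is because every point of X is a Gδ-point of βX while no point of βX \ X is a Gδ-point of βX. -/
open Filter Topology Set Metric unitInterval

/-- Preimage of a Gδ set under a continuous map is Gδ. -/
lemma isGdelta_preimage {Y Z : Type*} [TopologicalSpace Y] [TopologicalSpace Z]
    {f : Y → Z} (hf : Continuous f) {s : Set Z} (hs : IsGδ s) : IsGδ (f ⁻¹' s) := by
  obtain ⟨T, hTo, hTc, rfl⟩ := hs
  rw [Set.sInter_eq_biInter, Set.preimage_iInter₂]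
  exact IsGδ.biInter hTc fun t ht => ((hTo t ht).preimage hf).isGδ

/-- The closure of the range of a subsequence of a positive sequence tending to `0`
is contained in the range together with `0`. -/
lemma closure_range_subseq {t : ℕ → ℝ} (htpos : ∀ n, 0 < t n) (hanti : Antitone t)
    (htlim : Tendsto t atTop (𝓝 0)) (sg : ℕ → ℕ) (hsg : ∀ n, n ≤ sg n) :
    closure (Set.range fun n => t (sg n)) ⊆ (Set.range fun n => t (sg n)) ∪ {0} := by
  intro s hs
  by_contra hns
  rw [Set.mem_union] at hns
  push_neg at hns
  obtain ⟨hs1, hs2⟩ := hns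
  have hs0 : 0 ≤ s := by
    have : closure (Set.range fun n => t (sg n)) ⊆ Set.Ici (0:ℝ) := by
      rw [← isClosed_Ici.closure_eq]
      exact closure_mono (by rintro _ ⟨n, rfl⟩; exact (htpos _).le)
    exact this hs
  have hspos : 0 < s := lt_of_le_of_ne hs0 (by simpa [eq_comm] using hs2)
  obtain ⟨N, hN⟩ := (htlim.eventually_lt_const (half_pos hspos)).exists_forall_of_atTop
  have hsplit : (Set.range fun n => t (sg n)) =
      (fun n => t (sg n)) '' Set.Iio N ∪ (fun n => t (sg n)) '' Set.Ici N := by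
    rw [← Set.image_union, Set.Iio_union_Ici, Set.image_univ]
  rw [hsplit, closure_union] at hs
  rcases hs with h | h
  · have hfin : ((fun n => t (sg n)) '' Set.Iio N).Finite := (Set.finite_Iio N).image _
    rw [hfin.isClosed.closure_eq] at h
    exact hs1 (by rw [hsplit]; exact Set.mem_union_left _ h)
  · have hsub : (fun n => t (sg n)) '' Set.Ici N ⊆ Set.Iic (s/2) := by
      rintro _ ⟨n, hn, rfl⟩
      exact le_of_lt (lt_of_le_of_lt (hanti (le_trans hn (hsg n))) (hN N le_rfl))
    have : s ∈ Set.Iic (s/2) := by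
      have := closure_mono hsub h
      rwa [isClosed_Iic.closure_eq] at this
    simp only [Set.mem_Iic] at this
    linarith

lemma part1_aux {X : Type*} [TopologicalSpace X] [T2Space X] [CompletelyRegularSpace X]
    [FirstCountableTopology X] (x : X) : IsGδ ({stoneCechUnit x} : Set (StoneCech X)) := by
  obtain ⟨U, hU⟩ := (𝓝 x).exists_antitone_basis
  have hcr : ∀ n : ℕ, ∃ f : X → I, Continuous f ∧ f x = 0 ∧ Set.EqOn f 1 (interior (U n))ᶜ := by
    intro n
    exact CompletelyRegularSpace.completely_regular x _ isOpen_interior.isClosed_compl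
      (by simp [mem_interior_iff_mem_nhds.2 (hU.1.mem_of_mem trivial)])
  choose f hfc hfx hfK using hcr
  have hGδ : IsGδ (⋂ n, stoneCechExtend (hfc n) ⁻¹' ({(1:I)}ᶜ)) :=
    IsGδ.iInter_of_isOpen fun n =>
      isClosed_singleton.isOpen_compl.preimage (continuous_stoneCechExtend (hfc n))
  suffices h : ({stoneCechUnit x} : Set (StoneCech X)) =
      ⋂ n, stoneCechExtend (hfc n) ⁻¹' ({(1:I)}ᶜ) by rw [h]; exact hGδ
  apply Set.Subset.antisymm
  · rintro q hq
    rw [Set.mem_singleton_iff] at hq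
    subst hq
    simp only [Set.mem_iInter, Set.mem_preimage, Set.mem_compl_iff, Set.mem_singleton_iff]
    intro n
    have h1 : stoneCechExtend (hfc n) (stoneCechUnit x) = f n x :=
      congrFun (stoneCechExtend_extends (hfc n)) x
    rw [h1, hfx n]
    intro h01
    have := congrArg Subtype.val h01
    norm_num at this
  · intro p hp
    have hcl : p ∈ closure (Set.range (stoneCechUnit : X → StoneCech X)) :=
      denseRange_stoneCechUnit p
    have hinj : Function.Injective (stoneCechUnit : X → StoneCech X) := by
      intro a b hab
      by_contra hne'
      obtain ⟨f0, hf0c, hf0a, hf0b⟩ :=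
        CompletelyRegularSpace.completely_regular a {b} isClosed_singleton (by simpa using hne')
      have h2 := eq_if_stoneCechUnit_eq hf0c hab
      rw [hf0a, hf0b rfl] at h2
      have := congrArg Subtype.val h2
      norm_num at this
    haveI hne : NeBot (𝓝 p ⊓ 𝓟 (Set.range (stoneCechUnit : X → StoneCech X))) :=
      mem_closure_iff_clusterPt.1 hcl
    obtain ⟨u, hu⟩ := Ultrafilter.exists_le (𝓝 p ⊓ 𝓟 (Set.range (stoneCechUnit : X → StoneCech X)))
    have hrange : Set.range (stoneCechUnit : X → StoneCech X) ∈ u :=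
      le_principal_iff.1 (hu.trans inf_le_right)
    let v : Ultrafilter X := u.comap hinj hrange
    have hv : Tendsto (stoneCechUnit : X → StoneCech X) (v : Filter X) (𝓝 p) :=
      Filter.map_comap_le.trans (hu.trans inf_le_left)
    have hUn : ∀ n, U n ∈ (v : Filter X) := by
      intro n
      have h1 : Tendsto (stoneCechExtend (hfc n) ∘ stoneCechUnit) (v : Filter X)
          (𝓝 (stoneCechExtend (hfc n) p)) :=
        ((continuous_stoneCechExtend (hfc n)).tendsto p).comp hv
      rw [stoneCechExtend_extends (hfc n)] at h1
      have hp1 : stoneCechExtend (hfc n) p ∈ ({(1:I)}ᶜ : Set I) := by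
        have := Set.mem_iInter.1 hp n
        simpa using this
      have hev : ∀ᶠ y in (v : Filter X), f n y ∈ ({(1:I)}ᶜ : Set I) :=
        h1.eventually (isClosed_singleton.isOpen_compl.mem_nhds hp1)
      refine Filter.mem_of_superset hev ?_
      intro y hy
      by_contra hyn
      exact hy (hfK n (fun h => hyn (interior_subset h) : y ∈ (interior (U n))ᶜ))
    have hvx : (v : Filter X) ≤ 𝓝 x := by
      intro s hs
      obtain ⟨n, -, hn⟩ := hU.1.mem_iff.1 hs
      exact Filter.mem_of_superset (hUn n) hn
    have hfin := tendsto_nhds_unique hv ((continuous_stoneCechUnit.tendsto x).mono_left hvx)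
    exact Set.mem_singleton_iff.2 hfin
lemma part2_aux {X : Type*} [TopologicalSpace X] [T2Space X] [CompletelyRegularSpace X]
    (p : StoneCech X) (hp : p ∉ Set.range (stoneCechUnit : X → StoneCech X)) :
    ¬ IsGδ ({p} : Set (StoneCech X)) := by
  intro hGδ
  obtain ⟨f, hfp, -, -, hf01⟩ :=
    exists_continuous_one_zero_of_isCompact_of_isGδ isCompact_singleton hGδ isClosed_empty
      (Set.disjoint_empty _)
  set g : StoneCech X → ℝ := fun q => 1 - f q with hg
  have hgc : Continuous g := continuous_const.sub f.continuous
  have hgnn : ∀ q, 0 ≤ g q := fun q => by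
    have := (hf01 q).2; simp only [hg]; linarith
  have hgp : g p = 0 := by
    have h1 : p ∈ (⇑f) ⁻¹' {1} := by rw [← hfp]; exact rfl
    simp only [Set.mem_preimage, Set.mem_singleton_iff] at h1
    simp [hg, h1]
  have hgq : ∀ q, g q = 0 → q = p := by
    intro q h
    have h1 : f q = 1 := by simp only [hg] at h; linarith
    have h2 : q ∈ (⇑f) ⁻¹' {1} := by simpa using h1
    rw [← hfp] at h2
    simpa using h2
  set u : X → ℝ := fun x0 => g (stoneCechUnit x0) with hu
  have hu_cont : Continuous u := hgc.comp continuous_stoneCechUnit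
  have hupos : ∀ x0, 0 < u x0 := by
    intro x0
    rcases (hgnn (stoneCechUnit x0)).lt_or_eq with h | h
    · exact h
    · exfalso
      exact hp ⟨x0, hgq _ h.symm⟩
  have hsmall : ∀ ε : ℝ, 0 < ε → ∃ x0, u x0 < ε := by
    intro ε hε
    by_contra h
    push_neg at h
    have hcl : Set.range (stoneCechUnit : X → StoneCech X) ⊆ g ⁻¹' Set.Ici ε := by
      rintro _ ⟨x0, rfl⟩
      exact h x0
    have hc : IsClosed (g ⁻¹' Set.Ici ε) := isClosed_Ici.preimage hgc
    have hmem : p ∈ g ⁻¹' Set.Ici ε := by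
      have h1 := closure_mono hcl (denseRange_stoneCechUnit p)
      rwa [hc.closure_eq] at h1
    rw [Set.mem_preimage, Set.mem_Ici, hgp] at hmem
    linarith
  have key : ∀ a : X, ∃ b : X, u b < u a / 2 := fun a => hsmall _ (half_pos (hupos a))
  choose nxt hnxt using key
  obtain ⟨x0, -⟩ := hsmall 1 one_pos
  let seq : ℕ → X := fun n => Nat.recAux x0 (fun _ a => nxt a) n
  have hseq : ∀ n, u (seq (n + 1)) < u (seq n) / 2 := fun n => hnxt (seq n)
  set t : ℕ → ℝ := fun n => u (seq n) with ht
  have htpos : ∀ n, 0 < t n := fun n => hupos _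
  have htdec : ∀ n, t (n + 1) < t n := fun n => lt_of_lt_of_le (hseq n) (half_le_self (hupos (seq n)).le)
  have hanti : Antitone t := antitone_nat_of_succ_le fun n => (htdec n).le
  have hstrict : StrictAnti t := strictAnti_nat_of_succ_lt htdec
  have hbound : ∀ n, t n ≤ t 0 * (1 / 2) ^ n := by
    intro n
    induction n with
    | zero => simp
    | succ k ih =>
      have h1 := hseq k
      have h2 : t (k + 1) < t k / 2 := h1
      have : t 0 * (1 / 2) ^ (k + 1) = (t 0 * (1 / 2) ^ k) / 2 := by ring
      rw [this]
      linarith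
  have htlim : Tendsto t atTop (𝓝 0) := by
    apply squeeze_zero (fun n => (htpos n).le) hbound
    have h1 := (tendsto_pow_atTop_nhds_zero_of_lt_one (by norm_num : (0:ℝ) ≤ 1/2)
      (by norm_num : (1:ℝ)/2 < 1)).const_mul (t 0)
    simpa using h1
  set C : Set ℝ := Set.range fun n => t (2 * n) with hC
  set D : Set ℝ := Set.range fun n => t (2 * n + 1) with hD
  have hCne : C.Nonempty := ⟨t 0, 0, by norm_num⟩
  have hDne : D.Nonempty := ⟨t 1, 0, by norm_num⟩
  have hCcl : closure C ⊆ C ∪ {0} :=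
    closure_range_subseq htpos hanti htlim (fun n => 2 * n) (fun n => by omega)
  have hDcl : closure D ⊆ D ∪ {0} :=
    closure_range_subseq htpos hanti htlim (fun n => 2 * n + 1) (fun n => by omega)
  have hdisj : ∀ s : ℝ, s ∈ C → s ∈ D → False := by
    rintro s ⟨m, rfl⟩ ⟨k, hk⟩
    have := hstrict.injective hk
    omega
  have hmemCD : ∀ s : ℝ, 0 < s → s ∈ closure C → s ∈ closure D → False := by
    intro s hs h1 h2
    rcases hCcl h1 with h1' | h1'
    · rcases hDcl h2 with h2' | h2'
      · exact hdisj s h1' h2'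
      · simp only [Set.mem_singleton_iff] at h2'; linarith
    · simp only [Set.mem_singleton_iff] at h1'; linarith
  have hdenom : ∀ x1 : X, 0 < infDist (u x1) C + infDist (u x1) D := by
    intro x1
    rcases lt_or_eq_of_le (add_nonneg (infDist_nonneg (x := u x1) (s := C))
      (infDist_nonneg (x := u x1) (s := D))) with h | h
    · exact h
    · exfalso
      have h1 : infDist (u x1) C = 0 := by
        have := infDist_nonneg (x := u x1) (s := C)
        have := infDist_nonneg (x := u x1) (s := D)
        linarith
      have h2 : infDist (u x1) D = 0 := by
        have := infDist_nonneg (x := u x1) (s := C)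
        have := infDist_nonneg (x := u x1) (s := D)
        linarith
      exact hmemCD (u x1) (hupos x1) ((mem_closure_iff_infDist_zero hCne).2 h1)
        ((mem_closure_iff_infDist_zero hDne).2 h2)
  set w : X → ℝ := fun x1 => infDist (u x1) C / (infDist (u x1) C + infDist (u x1) D) with hw
  have hwc : Continuous w := by
    apply Continuous.div
    · exact (continuous_infDist_pt C).comp hu_cont
    · exact ((continuous_infDist_pt C).comp hu_cont).add ((continuous_infDist_pt D).comp hu_cont)
    · exact fun x1 => (hdenom x1).ne'
  have hw01 : ∀ x1, w x1 ∈ Set.Icc (0:ℝ) 1 := by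
    intro x1
    constructor
    · exact div_nonneg infDist_nonneg (hdenom x1).le
    · rw [div_le_one (hdenom x1)]
      exact le_add_of_nonneg_right infDist_nonneg
  set wI : X → I := fun x1 => ⟨w x1, hw01 x1⟩ with hwI
  have hwIc : Continuous wI := hwc.subtype_mk _
  have hEunit : ∀ x1, stoneCechExtend hwIc (stoneCechUnit x1) = wI x1 := fun x1 =>
    congrFun (stoneCechExtend_extends hwIc) x1
  have hconv : Tendsto (fun n => stoneCechUnit (seq n)) atTop (𝓝 p) := by
    rw [_root_.tendsto_nhds]
    intro s hso hps
    by_contra hev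
    have hev' : ¬ ∀ᶠ n in atTop, stoneCechUnit (seq n) ∈ s := hev
    rw [Filter.not_eventually] at hev'
    have hfreq : ∃ᶠ q in Filter.map (fun n => stoneCechUnit (seq n)) atTop, q ∈ sᶜ := by
      rw [Filter.frequently_map]
      exact hev'.mono fun n hn => hn
    haveI hne2 : NeBot (Filter.map (fun n => stoneCechUnit (seq n)) atTop ⊓ 𝓟 sᶜ) := by
      rw [Filter.frequently_iff_neBot] at hfreq
      exact hfreq
    obtain ⟨q, hq⟩ :=
      exists_clusterPt_of_compactSpace (Filter.map (fun n => stoneCechUnit (seq n)) atTop ⊓ 𝓟 sᶜ)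
    have hq1 : ClusterPt q (Filter.map (fun n => stoneCechUnit (seq n)) atTop) :=
      hq.mono inf_le_left
    have hq2 : q ∈ sᶜ := by
      have h1 : ClusterPt q (𝓟 (sᶜ : Set (StoneCech X))) := hq.mono inf_le_right
      have h2 : q ∈ closure (sᶜ : Set (StoneCech X)) := mem_closure_iff_clusterPt.2 h1
      rwa [hso.isClosed_compl.closure_eq] at h2
    have hgq0 : ClusterPt (g q) (Filter.map t atTop) := by
      apply hq1.map hgc.continuousAt
      rw [Filter.tendsto_map'_iff]
      exact Filter.tendsto_map
    have hq0 : g q = 0 := by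
      have hle : Filter.map t atTop ≤ 𝓝 0 := htlim
      have hnb : NeBot (𝓝 (g q) ⊓ 𝓝 (0:ℝ)) := hgq0.mono hle
      exact eq_of_nhds_neBot hnb
    exact hq2 (hgq q hq0 ▸ hps)
  have hconvE : Tendsto (fun n => (stoneCechExtend hwIc (stoneCechUnit (seq (n)))).1) atTop
      (𝓝 (stoneCechExtend hwIc p).1) :=
    ((continuous_subtype_val.comp (continuous_stoneCechExtend hwIc)).tendsto p).comp hconv
  have h2k : Tendsto (fun k : ℕ => 2 * k) atTop atTop :=
    tendsto_atTop_mono (fun k => by simp; omega) tendsto_id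
  have h2k1 : Tendsto (fun k : ℕ => 2 * k + 1) atTop atTop :=
    tendsto_atTop_mono (fun k => by simp; omega) tendsto_id
  have heven : Tendsto (fun k : ℕ => (stoneCechExtend hwIc (stoneCechUnit (seq (2 * k)))).1)
      atTop (𝓝 (stoneCechExtend hwIc p).1) := hconvE.comp h2k
  have hodd : Tendsto (fun k : ℕ => (stoneCechExtend hwIc (stoneCechUnit (seq (2 * k + 1)))).1)
      atTop (𝓝 (stoneCechExtend hwIc p).1) := hconvE.comp h2k1
  have heven0 : ∀ k : ℕ, (stoneCechExtend hwIc (stoneCechUnit (seq (2 * k)))).1 = 0 := by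
    intro k
    rw [hEunit]
    show w (seq (2 * k)) = 0
    have hmem : u (seq (2 * k)) ∈ C := ⟨k, rfl⟩
    simp [hw, infDist_zero_of_mem hmem]
  have hodd1 : ∀ k : ℕ, (stoneCechExtend hwIc (stoneCechUnit (seq (2 * k + 1)))).1 = 1 := by
    intro k
    rw [hEunit]
    show w (seq (2 * k + 1)) = 1
    have hmem : u (seq (2 * k + 1)) ∈ D := ⟨k, rfl⟩
    have hD0 : infDist (u (seq (2 * k + 1))) D = 0 := infDist_zero_of_mem hmem
    have hCpos : infDist (u (seq (2 * k + 1))) C ≠ 0 := by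
      intro h0
      have hclC : u (seq (2 * k + 1)) ∈ closure C := (mem_closure_iff_infDist_zero hCne).2 h0
      rcases hCcl hclC with h' | h'
      · exact hdisj _ h' hmem
      · simp only [Set.mem_singleton_iff] at h'
        exact (hupos (seq (2 * k + 1))).ne' h'
    show infDist (u (seq (2 * k + 1))) C / (infDist (u (seq (2 * k + 1))) C
      + infDist (u (seq (2 * k + 1))) D) = 1
    rw [hD0, add_zero, div_self hCpos]
  have hE0 : (stoneCechExtend hwIc p).1 = 0 :=
    tendsto_nhds_unique (Filter.Tendsto.congr heven0 heven) tendsto_const_nhds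
  have hE1 : (stoneCechExtend hwIc p).1 = 1 :=
    tendsto_nhds_unique (Filter.Tendsto.congr hodd1 hodd) tendsto_const_nhds
  rw [hE0] at hE1
  norm_num at hE1

/-- If `X` is a first countable completely regular Hausdorff space, then every point of `X`
is a `Gδ`-point of `βX`, no point of `βX \ X` is a `Gδ`-point of `βX`, and consequently every
self-homeomorphism `φ` of `βX` satisfies `φ(X) = X`. -/
theorem statement7 {X : Type*} [TopologicalSpace X] [T2Space X] [CompletelyRegularSpace X]
    [FirstCountableTopology X] :
    (∀ x : X, IsGδ ({stoneCechUnit x} : Set (StoneCech X))) ∧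
    (∀ p : StoneCech X, p ∉ Set.range (stoneCechUnit : X → StoneCech X) →
      ¬ IsGδ ({p} : Set (StoneCech X))) ∧
    (∀ φ : StoneCech X ≃ₜ StoneCech X,
      φ '' Set.range (stoneCechUnit : X → StoneCech X) =
        Set.range (stoneCechUnit : X → StoneCech X)) := by
  refine ⟨part1_aux, part2_aux, ?_⟩
  intro φ
  have hsing : ∀ (ψ : StoneCech X ≃ₜ StoneCech X) (x : X),
      IsGδ ({ψ (stoneCechUnit x)} : Set (StoneCech X)) := by
    intro ψ x
    have h1 : ({ψ (stoneCechUnit x)} : Set (StoneCech X)) = ψ.symm ⁻¹' {stoneCechUnit x} := by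
      ext r
      simp only [Set.mem_singleton_iff, Set.mem_preimage]
      constructor
      · rintro rfl; simp
      · intro h; rw [← h]; simp
    rw [h1]
    exact isGdelta_preimage ψ.symm.continuous (part1_aux x)
  apply Set.Subset.antisymm
  · rintro _ ⟨_, ⟨x, rfl⟩, rfl⟩
    by_contra hq
    exact part2_aux _ hq (hsing φ x)
  · rintro _ ⟨x, rfl⟩
    refine ⟨φ.symm (stoneCechUnit x), ?_, by simp⟩
    by_contra hq
    exact part2_aux _ hq (hsing φ.symm x)
end

section
/- Define a relation on βℕ \ ℕ by p ∼ q if and only if there exists a permutation σ of ℕ whose continuous extension σ* : βℕ → βℕ satisfies σ*(p) = q. Then ∼ is an equivalence relation on βℕ \ ℕ, and (Frolík) there exist exactly 2^c equivalence classes (types of ultrafilters on ℕ); in particular there is a subset S of βℕ \ ℕ with |S| = 2^c containing exactly one member of each type. -/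
open Filter Topology

/-- The continuous extension `σ* : βℕ → βℕ` of a permutation `σ` of `ℕ`. -/
noncomputable def permExt (σ : Equiv.Perm ℕ) : StoneCech ℕ → StoneCech ℕ :=
  stoneCechExtend (show Continuous (fun n : ℕ => stoneCechUnit (σ n)) from
    continuous_of_discreteTopology)

section Aux

open Cardinal Set

lemma permExt_continuous (σ : Equiv.Perm ℕ) : Continuous (permExt σ) :=
  continuous_stoneCechExtend _

lemma permExt_unit (σ : Equiv.Perm ℕ) (n : ℕ) :
    permExt σ (stoneCechUnit n) = stoneCechUnit (σ n) :=
  congrFun (stoneCechExtend_extends _) n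

lemma permExt_mul (σ τ : Equiv.Perm ℕ) (p : StoneCech ℕ) :
    permExt σ (permExt τ p) = permExt (σ * τ) p := by
  have : permExt σ ∘ permExt τ = permExt (σ * τ) := by
    apply ((permExt_continuous σ).comp (permExt_continuous τ)).ext_on
      denseRange_stoneCechUnit (permExt_continuous _)
    rintro _ ⟨n, rfl⟩
    simp [Function.comp, permExt_unit]
  exact congrFun this p

lemma permExt_one (p : StoneCech ℕ) : permExt 1 p = p := by
  have : permExt 1 = id := by
    apply (permExt_continuous 1).ext_on denseRange_stoneCechUnit continuous_id
    rintro _ ⟨n, rfl⟩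
    simp [permExt_unit]
  simpa using congrFun this p

/-- The map `βℕ → Ultrafilter ℕ` extending `pure`. -/
noncomputable def toU : StoneCech ℕ → Ultrafilter ℕ :=
  stoneCechExtend (show Continuous (pure : ℕ → Ultrafilter ℕ) from continuous_of_discreteTopology)

lemma toU_bijective : Function.Bijective toU := by
  set h : Ultrafilter ℕ → StoneCech ℕ := Ultrafilter.extend stoneCechUnit with hh
  have hcont : Continuous h := continuous_ultrafilter_extend _
  have l1 : h ∘ toU = id := by
    apply (hcont.comp (continuous_stoneCechExtend _)).ext_on
      denseRange_stoneCechUnit continuous_id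
    rintro _ ⟨n, rfl⟩
    have e1 : toU (stoneCechUnit n) = pure n := congrFun (stoneCechExtend_extends _) n
    show h (toU (stoneCechUnit n)) = stoneCechUnit n
    rw [e1]
    exact congrFun (ultrafilter_extend_extends stoneCechUnit) n
  have l2 : toU ∘ h = id := by
    apply ((continuous_stoneCechExtend _).comp hcont).ext_on denseRange_pure continuous_id
    rintro _ ⟨n, rfl⟩
    have e1 : h (pure n) = stoneCechUnit n := congrFun (ultrafilter_extend_extends _) n
    show toU (h (pure n)) = pure n
    rw [e1]
    exact congrFun (stoneCechExtend_extends _) n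
  exact ⟨Function.LeftInverse.injective (congrFun l1),
    Function.RightInverse.surjective (congrFun l2)⟩

end Aux

open Filter Topology Cardinal Set

open scoped Classical in
/-- `finInter s X = s ∩ X` as a finset. -/
noncomputable def finInter (s : Finset ℕ) (X : Set ℕ) : Finset ℕ := s.filter (· ∈ X)

/-- The member `A_X` of the independent family, indexed by `X : Set ℕ`, living on the
countable set `Finset ℕ × Finset (Finset ℕ)`. -/
def idxSet (X : Set ℕ) : Set (Finset ℕ × Finset (Finset ℕ)) :=
  {p | finInter p.1 X ∈ p.2}

open scoped Classical in
lemma key (𝒳 : Finset (Set ℕ)) (f : Set ℕ → Bool) :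
    ∃ p : Finset ℕ × Finset (Finset ℕ), ∀ X ∈ 𝒳,
      p ∈ (if f X then idxSet X else (idxSet X)ᶜ) := by
  -- a separating finite set
  set g : Set ℕ × Set ℕ → ℕ := fun q =>
    if h : ∃ n, ¬ (n ∈ q.1 ↔ n ∈ q.2) then h.choose else 0 with hg
  set s : Finset ℕ := (𝒳 ×ˢ 𝒳).image g with hs
  have sep : ∀ X ∈ 𝒳, ∀ Y ∈ 𝒳, X ≠ Y → finInter s X ≠ finInter s Y := by
    intro X hX Y hY hXY
    have hex : ∃ n, ¬ (n ∈ X ↔ n ∈ Y) := by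
      by_contra h
      push_neg at h
      exact hXY (Set.ext fun n => h n)
    have hn : g (X, Y) = hex.choose := by simp [hg, hex]
    have hmem : g (X, Y) ∈ s := Finset.mem_image_of_mem _ (Finset.mem_product.2 ⟨hX, hY⟩)
    intro hEq
    have := hex.choose_spec
    rw [← hn] at this
    have h1 : g (X, Y) ∈ finInter s X ↔ g (X, Y) ∈ X := by
      simp [finInter, hmem]
    have h2 : g (X, Y) ∈ finInter s Y ↔ g (X, Y) ∈ Y := by
      simp [finInter, hmem]
    rw [hEq] at h1
    exact this (h1.symm.trans h2)
  refine ⟨(s, (𝒳.filter fun X => f X).image (finInter s)), ?_⟩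
  intro X hX
  by_cases hfX : f X
  · simp only [hfX, if_true]
    exact Finset.mem_image_of_mem _ (Finset.mem_filter.2 ⟨hX, hfX⟩)
  · simp only [hfX, if_false]
    intro hmem
    rcases Finset.mem_image.1 hmem with ⟨Y, hY, hYX⟩
    rcases Finset.mem_filter.1 hY with ⟨hY𝒳, hfY⟩
    have hXY : X ≠ Y := fun h => hfX (h ▸ hfY)
    exact sep Y hY𝒳 X hX (fun h => hXY h.symm) hYX

/-- the generating family for `f : Set ℕ → Bool` -/
def famSets (f : Set ℕ → Bool) : Set (Set (Finset ℕ × Finset (Finset ℕ))) :=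
  Set.range fun X => if f X then idxSet X else (idxSet X)ᶜ

lemma famSets_neBot (f : Set ℕ → Bool) : (Filter.generate (famSets f)).NeBot := by
  rw [Filter.generate_neBot_iff]
  intro t hts htfin
  set G : Set ℕ → Set (Finset ℕ × Finset (Finset ℕ)) :=
    fun X => if f X then idxSet X else (idxSet X)ᶜ with hG
  have hrange : ∀ u ∈ t, G (Function.invFun G u) = u := by
    intro u hu
    exact Function.invFun_eq (hts hu)
  classical
  set 𝒳 : Finset (Set ℕ) := htfin.toFinset.image (Function.invFun G) with h𝒳
  obtain ⟨p, hp⟩ := key 𝒳 f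
  refine ⟨p, ?_⟩
  rintro u hu
  have hmem : Function.invFun G u ∈ 𝒳 :=
    Finset.mem_image_of_mem _ (htfin.mem_toFinset.2 hu)
  have h2 : p ∈ G (Function.invFun G u) := hp _ hmem
  rwa [hrange u hu] at h2

noncomputable def famU (f : Set ℕ → Bool) : Ultrafilter (Finset ℕ × Finset (Finset ℕ)) :=
  @Ultrafilter.of _ (Filter.generate (famSets f)) (famSets_neBot f)

lemma mem_famU_of_true {f : Set ℕ → Bool} {X : Set ℕ} (h : f X = true) : idxSet X ∈ famU f := by
  have h1 : idxSet X ∈ famSets f := ⟨X, by simp only [h]; simp⟩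
  exact (@Ultrafilter.of_le _ (Filter.generate (famSets f)) (famSets_neBot f))
    (Filter.mem_generate_of_mem h1)

lemma mem_famU_of_false {f : Set ℕ → Bool} {X : Set ℕ} (h : f X = false) :
    (idxSet X)ᶜ ∈ famU f := by
  have h1 : (idxSet X)ᶜ ∈ famSets f := ⟨X, by simp only [h]; simp⟩
  exact (@Ultrafilter.of_le _ (Filter.generate (famSets f)) (famSets_neBot f))
    (Filter.mem_generate_of_mem h1)

lemma famU_injective : Function.Injective famU := by
  intro f g hfg
  funext X
  by_contra hne
  have hcases : f X = true ∧ g X = false ∨ f X = false ∧ g X = true := by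
    cases hf : f X <;> cases hg : g X <;> simp_all
  rcases hcases with ⟨h1, h2⟩ | ⟨h1, h2⟩
  · have m1 := mem_famU_of_true h1
    have m2 := mem_famU_of_false h2
    rw [← hfg] at m2
    exact (Ultrafilter.compl_notMem_iff.mpr m1) m2
  · have m1 := mem_famU_of_false h1
    have m2 := mem_famU_of_true h2
    rw [hfg] at m1
    exact (Ultrafilter.compl_notMem_iff.mpr m2) m1

lemma card_ultrafilter_nat : #(Ultrafilter ℕ) = 2 ^ Cardinal.continuum := by
  apply le_antisymm
  · have hinj : Function.Injective (fun u : Ultrafilter ℕ => {s | s ∈ u}) := by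
      intro u v h
      exact Ultrafilter.coe_injective (Filter.ext fun s => Set.ext_iff.mp h s)
    calc #(Ultrafilter ℕ) ≤ #(Set (Set ℕ)) := Cardinal.mk_le_of_injective hinj
      _ = 2 ^ Cardinal.continuum := by
          rw [Cardinal.mk_set, Cardinal.mk_set, Cardinal.mk_nat, Cardinal.two_power_aleph0]
  · have e : (Finset ℕ × Finset (Finset ℕ)) ≃ ℕ := Denumerable.eqv _
    have hinj2 : Function.Injective
        (Ultrafilter.map e : Ultrafilter (Finset ℕ × Finset (Finset ℕ)) → Ultrafilter ℕ) := by
      intro u v h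
      ext s
      have key : ∀ w : Ultrafilter (Finset ℕ × Finset (Finset ℕ)),
          s ∈ w ↔ e '' s ∈ Ultrafilter.map e w := by
        intro w
        rw [Ultrafilter.mem_map, Equiv.preimage_image]
      rw [key u, key v, h]
      -- done
    calc (2 : Cardinal) ^ Cardinal.continuum = #(Set ℕ → Bool) := by
          rw [← Cardinal.power_def, Cardinal.mk_bool, Cardinal.mk_set, Cardinal.mk_nat,
            Cardinal.two_power_aleph0]
      _ ≤ #(Ultrafilter (Finset ℕ × Finset (Finset ℕ))) := Cardinal.mk_le_of_injective famU_injective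
      _ ≤ #(Ultrafilter ℕ) := Cardinal.mk_le_of_injective hinj2

section Final

open Cardinal Set

lemma card_stoneCech : #(StoneCech ℕ) = 2 ^ Cardinal.continuum :=
  (Cardinal.mk_congr (Equiv.ofBijective toU toU_bijective)).trans card_ultrafilter_nat

lemma aleph0_lt_two_power_continuum : (Cardinal.aleph0 : Cardinal) < 2 ^ Cardinal.continuum :=
  Cardinal.aleph0_lt_continuum.trans (Cardinal.cantor _)

instance : Infinite (StoneCech ℕ) :=
  Cardinal.infinite_iff.mpr (by rw [card_stoneCech]; exact aleph0_lt_two_power_continuum.le)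

lemma card_compl_range_unit :
    #((Set.range (stoneCechUnit : ℕ → StoneCech ℕ))ᶜ : Set (StoneCech ℕ)) =
      2 ^ Cardinal.continuum := by
  have hlt : #(Set.range (stoneCechUnit : ℕ → StoneCech ℕ)) < #(StoneCech ℕ) := by
    calc #(Set.range (stoneCechUnit : ℕ → StoneCech ℕ)) ≤ #ℕ := Cardinal.mk_range_le
      _ = Cardinal.aleph0 := Cardinal.mk_nat
      _ < 2 ^ Cardinal.continuum := aleph0_lt_two_power_continuum
      _ = #(StoneCech ℕ) := card_stoneCech.symm
  rw [Cardinal.mk_compl_of_infinite _ hlt, card_stoneCech]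

lemma card_perm_nat : #(Equiv.Perm ℕ) = Cardinal.continuum := by
  rw [Cardinal.mk_perm_eq_two_power, Cardinal.mk_nat, Cardinal.two_power_aleph0]

end Final

open Cardinal in
/-- The relation `p ∼ q ↔ σ*(p) = q` for some permutation `σ` of `ℕ` is an equivalence
relation on `βℕ \ ℕ`, and (Frolík) there are exactly `2^𝔠` equivalence classes (types of
ultrafilters on `ℕ`): there is a set `S ⊆ βℕ \ ℕ` of cardinality `2^𝔠` containing exactly one
member of each type. -/
theorem statement12 :
    Equivalence (fun p q : ((Set.range (stoneCechUnit : ℕ → StoneCech ℕ))ᶜ : Set (StoneCech ℕ)) =>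
      ∃ σ : Equiv.Perm ℕ, permExt σ (p : StoneCech ℕ) = (q : StoneCech ℕ)) ∧
    ∃ S : Set ((Set.range (stoneCechUnit : ℕ → StoneCech ℕ))ᶜ : Set (StoneCech ℕ)),
      Cardinal.mk S = 2 ^ Cardinal.continuum ∧
      ∀ p : ((Set.range (stoneCechUnit : ℕ → StoneCech ℕ))ᶜ : Set (StoneCech ℕ)),
        ∃! s, s ∈ S ∧ ∃ σ : Equiv.Perm ℕ, permExt σ (s : StoneCech ℕ) = (p : StoneCech ℕ) := by
  have hequiv : Equivalence
      (fun p q : ((Set.range (stoneCechUnit : ℕ → StoneCech ℕ))ᶜ : Set (StoneCech ℕ)) =>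
        ∃ σ : Equiv.Perm ℕ, permExt σ (p : StoneCech ℕ) = (q : StoneCech ℕ)) := by
    constructor
    · intro p; exact ⟨1, permExt_one _⟩
    · rintro p q ⟨σ, hσ⟩
      refine ⟨σ⁻¹, ?_⟩
      rw [← hσ, permExt_mul, inv_mul_cancel, permExt_one]
    · rintro p q r ⟨σ, hσ⟩ ⟨τ, hτ⟩
      exact ⟨τ * σ, by rw [← permExt_mul, hσ, hτ]⟩
  refine ⟨hequiv, ?_⟩
  letI st : Setoid ((Set.range (stoneCechUnit : ℕ → StoneCech ℕ))ᶜ : Set (StoneCech ℕ)) :=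
    ⟨_, hequiv⟩
  -- the quotient has cardinality `2 ^ 𝔠`
  have hQle : #(Quotient st) ≤ 2 ^ Cardinal.continuum :=
    card_compl_range_unit ▸ Cardinal.mk_quotient_le
  have hfiber : ∀ q : Quotient st,
      #{p // Quotient.mk st p = q} ≤ Cardinal.continuum := by
    intro q
    obtain ⟨s, rfl⟩ := Quotient.exists_rep q
    set F : Equiv.Perm ℕ → StoneCech ℕ := fun σ => permExt σ (s : StoneCech ℕ) with hF
    have hmem : ∀ p : {p // Quotient.mk st p = Quotient.mk st s},
        ((p : ((Set.range (stoneCechUnit : ℕ → StoneCech ℕ))ᶜ : Set (StoneCech ℕ))) :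
          StoneCech ℕ) ∈ Set.range F := by
      intro p
      have hr : ∃ σ : Equiv.Perm ℕ, permExt σ (s : StoneCech ℕ) = ((p : _) : StoneCech ℕ) :=
        Quotient.eq.mp p.2.symm
      obtain ⟨σ, hσ⟩ := hr
      exact ⟨σ, hσ⟩
    have hinj : Function.Injective
        (fun p : {p // Quotient.mk st p = Quotient.mk st s} =>
          (⟨_, hmem p⟩ : Set.range F)) := by
      intro p1 p2 h
      have := congrArg Subtype.val h
      exact Subtype.ext (Subtype.ext this)
    calc #{p // Quotient.mk st p = Quotient.mk st s} ≤ #(Set.range F) :=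
        Cardinal.mk_le_of_injective hinj
      _ ≤ #(Equiv.Perm ℕ) := Cardinal.mk_range_le
      _ = Cardinal.continuum := card_perm_nat
  have hQge : 2 ^ Cardinal.continuum ≤ #(Quotient st) := by
    have h1 : #((Set.range (stoneCechUnit : ℕ → StoneCech ℕ))ᶜ : Set (StoneCech ℕ)) ≤
        #(Quotient st) * Cardinal.continuum := by
      calc #((Set.range (stoneCechUnit : ℕ → StoneCech ℕ))ᶜ : Set (StoneCech ℕ))
          = #(Σ q : Quotient st, {p // Quotient.mk st p = q}) :=
            (Cardinal.mk_congr (Equiv.sigmaFiberEquiv (Quotient.mk st))).symm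
        _ = Cardinal.sum (fun q : Quotient st => #{p // Quotient.mk st p = q}) :=
            Cardinal.mk_sigma _
        _ ≤ Cardinal.sum (fun _ : Quotient st => Cardinal.continuum) :=
            Cardinal.sum_le_sum _ _ hfiber
        _ = #(Quotient st) * Cardinal.continuum := Cardinal.sum_const' _ _
    rw [card_compl_range_unit] at h1
    have h2 := h1.trans (Cardinal.mul_le_max _ _)
    by_contra hlt
    have : max (max #(Quotient st) Cardinal.continuum) Cardinal.aleph0 <
        2 ^ Cardinal.continuum :=
      max_lt (max_lt (not_le.mp hlt) (Cardinal.cantor _)) aleph0_lt_two_power_continuum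
    exact absurd h2 (not_le.mpr this)
  have hQ : #(Quotient st) = 2 ^ Cardinal.continuum := le_antisymm hQle hQge
  refine ⟨Set.range (Quotient.out : Quotient st → _), ?_, ?_⟩
  · rw [Cardinal.mk_range_eq _ Quotient.out_injective]
    exact hQ
  · intro p
    refine ⟨(Quotient.mk st p).out, ⟨⟨_, rfl⟩, ?_⟩, ?_⟩
    · exact Quotient.mk_out p
    · rintro s' ⟨⟨q, rfl⟩, σ, hσ⟩
      have h3 : Quotient.mk st q.out = Quotient.mk st p := Quotient.sound ⟨σ, hσ⟩
      rw [Quotient.out_eq] at h3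
      rw [h3]
end
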